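/- arXiv:1809.01227 — 7 statements merged into one kernel-verified Lean document; each statement's English description precedes it below -/
import Mathlib

section
/- If G is a graph on n ≥ 3 vertices with minimum degree δ(G) ≥ (n+1)/2, then G is Hamiltonian-connected, i.e., every pair of distinct vertices is joined by a Hamiltonian path. -/
open SimpleGraph Finset Matrix

variable {V : Type*} [Fintype V] [DecidableEq V]

def SimpleGraph.IsHamiltonianConnected (G : SimpleGraph V) : Prop :=
  ∀ u v : V, u ≠ v → ∃ p : G.Walk u v, p.IsHamiltonian

def SimpleGraph.IsTraceable (G : SimpleGraph V) : Prop :=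
  ∃ (u v : V) (p : G.Walk u v), p.IsHamiltonian

def SimpleGraph.IsHomogeneouslyTraceable (G : SimpleGraph V) : Prop :=
  ∀ u : V, ∃ (v : V) (p : G.Walk u v), p.IsHamiltonian

/-- `G` is `k`-connected: more than `k` vertices, and removing fewer than `k`
vertices leaves a connected graph. -/
def SimpleGraph.IsKConnected (G : SimpleGraph V) (k : ℕ) : Prop :=
  k < Fintype.card V ∧
    ∀ S : Finset V, S.card < k → (G.induce ((↑S : Set V)ᶜ)).Connected

def SimpleGraph.IsIndependentSet (G : SimpleGraph V) (s : Finset V) : Prop :=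
  ∀ u ∈ s, ∀ v ∈ s, ¬ G.Adj u v

noncomputable def lapHerm (G : SimpleGraph V) [DecidableRel G.Adj] :
    (G.lapMatrix ℝ).IsHermitian := (G.posSemidef_lapMatrix ℝ).1

/-- Laplacian spectral radius μ₁. -/
noncomputable def lapSpecRad (G : SimpleGraph V) [DecidableRel G.Adj] : ℝ :=
  ⨆ i, (lapHerm G).eigenvalues i

noncomputable def adjHerm (G : SimpleGraph V) [DecidableRel G.Adj] :
    (G.adjMatrix ℝ).IsHermitian := by
  rw [Matrix.IsHermitian, conjTranspose_eq_transpose_of_trivial, isSymm_adjMatrix]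

/-- Adjacency spectral radius λ₁. -/
noncomputable def adjSpecRad (G : SimpleGraph V) [DecidableRel G.Adj] : ℝ :=
  ⨆ i, (adjHerm G).eigenvalues i

/-- Smallest adjacency eigenvalue λ_n. -/
noncomputable def adjSpecMin (G : SimpleGraph V) [DecidableRel G.Adj] : ℝ :=
  ⨅ i, (adjHerm G).eigenvalues i

/-- The join `K₁ ∇ G`: a new universal vertex added to `G`. -/
def joinK1 (G : SimpleGraph V) : SimpleGraph (Option V) where
  Adj a b := match a, b with
    | none, none => False
    | none, some _ => True
    | some _, none => True
    | some u, some v => G.Adj u v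
  symm := ⟨by rintro (_|u) (_|v) h <;> simp_all [G.adj_symm]⟩
  loopless := ⟨by rintro (_|u) h <;> simp_all⟩



section Aux
variable {W : Type*} [Fintype W] [DecidableEq W]

/-- A "Hamiltonian cycle list": nodup, covers all vertices, consecutive adjacency,
and the last element is adjacent to the first. -/
structure HCL (H : SimpleGraph W) (L : List W) : Prop where
  nodup : L.Nodup
  chain : L.IsChain H.Adj
  cover : ∀ x, x ∈ L
  closed : ∀ a ∈ L.getLast?, ∀ b ∈ L.head?, H.Adj a b

lemma length_eq_card {L : List W} (h1 : L.Nodup) (h2 : ∀ x, x ∈ L) :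
    L.length = Fintype.card W := by
  rw [← List.toFinset_card_of_nodup h1]
  have : L.toFinset = Finset.univ := Finset.eq_univ_iff_forall.2 (fun x => List.mem_toFinset.2 (h2 x))
  rw [this, Finset.card_univ]

lemma exists_walk {G : SimpleGraph W} :
    ∀ (L : List W) (a b : W), L.head? = some a → L.getLast? = some b →
      L.IsChain G.Adj → ∃ p : G.Walk a b, p.support = L := by
  intro L
  induction L with
  | nil => intro a b h; simp at h
  | cons x T ih =>
    intro a b ha hb hc
    simp only [List.head?_cons, Option.some.injEq] at ha
    subst ha
    cases T with
    | nil =>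
      simp only [List.getLast?_singleton, Option.some.injEq] at hb
      subst hb
      exact ⟨SimpleGraph.Walk.nil, rfl⟩
    | cons y T' =>
      rw [List.isChain_cons_cons] at hc
      rw [List.getLast?_cons_cons] at hb
      obtain ⟨q, hq⟩ := ih y b rfl hb hc.2
      exact ⟨SimpleGraph.Walk.cons hc.1 q, by simp [hq]⟩

end Aux

section Rot
set_option linter.unusedSectionVars false
variable {W : Type*} [Fintype W] [DecidableEq W] {H : SimpleGraph W} {L : List W}

lemma HCL.rot1 (h : HCL H L) : HCL H (L.rotate 1) := by
  cases L with
  | nil => simpa using h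
  | cons y T =>
    have hrot : (y :: T).rotate 1 = T ++ [y] := by
      rw [List.rotate_cons_succ, List.rotate_zero]
    rw [hrot]
    have hperm : List.Perm (y :: T) (T ++ [y]) := (List.perm_append_singleton y T).symm
    cases T with
    | nil =>
      exact absurd (h.closed y (by simp) y (by simp)) (H.irrefl)
    | cons t T' =>
      refine ⟨hperm.nodup h.nodup, ?_, fun x => hperm.mem_iff.1 (h.cover x), ?_⟩
      · rw [List.isChain_append]
        refine ⟨h.chain.tail, List.isChain_singleton y, ?_⟩
        intro a ha b hb
        simp only [List.head?_cons, Option.mem_def, Option.some.injEq] at hb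
        subst hb
        exact h.closed a (by rw [List.getLast?_cons_cons]; exact ha) y (by simp)
      · intro a ha b hb
        rw [List.getLast?_concat] at ha
        simp only [Option.mem_def, Option.some.injEq] at ha
        subst ha
        have hbt : b = t := by
          have := hb; simp at this; exact this.symm
        subst hbt
        exact (List.isChain_cons_cons.1 h.chain).1

lemma HCL.rotn (h : HCL H L) (n : ℕ) : HCL H (L.rotate n) := by
  induction n with
  | zero => simpa using h
  | succ n ih =>
    have : L.rotate (n+1) = (L.rotate n).rotate 1 := by rw [List.rotate_rotate]
    rw [this]; exact ih.rot1

lemma HCL.rot_to (h : HCL H L) {x : W} (hx : x ∈ L) : ∃ T, HCL H (x :: T) := by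
  set n := L.idxOf x with hn
  have hlt : n < L.length := List.idxOf_lt_length_iff.2 hx
  have hhead : (L.rotate n).head? = some x := by
    rw [List.rotate_eq_drop_append_take hlt.le]
    have hdrop : (L.drop n).head? = some x := by
      rw [List.head?_drop]
      simp only [List.getElem?_eq_getElem hlt]
      rw [List.getElem_idxOf hlt]
    cases hD : L.drop n with
    | nil => rw [hD] at hdrop; simp at hdrop
    | cons z t =>
      rw [hD] at hdrop
      simp only [List.head?_cons, Option.some.injEq] at hdrop
      subst hdrop
      simp
  have hr := h.rotn n
  cases hR : L.rotate n with
  | nil => rw [hR] at hhead; simp at hhead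
  | cons z T =>
    rw [hR] at hhead hr
    simp only [List.head?_cons, Option.some.injEq] at hhead
    subst hhead
    exact ⟨T, hr⟩

end Rot

section Crossing
set_option linter.unusedSectionVars false
variable {W : Type*} [Fintype W] [DecidableEq W]

lemma crossing {H : SimpleGraph W} [DecidableRel H.Adj] {P : List W}
    (hnd : P.Nodup) (hch : P.IsChain H.Adj) (hcov : ∀ x, x ∈ P) {c d : W}
    (hc : P.head? = some c) (hd : P.getLast? = some d) (hcd : ¬ H.Adj c d)
    (hdeg : P.length ≤ H.degree c + H.degree d) : ∃ L, HCL H L := by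
  classical
  have hPne : P ≠ [] := by intro h; rw [h] at hc; simp at hc
  have hm1 : 1 ≤ P.length := List.length_pos_iff.2 hPne
  have hP0 : ∀ (h : 0 < P.length), P[0] = c := by
    intro h
    have := hc
    rw [List.head?_eq_getElem?, List.getElem?_eq_getElem h] at this
    simpa using this
  have hPlast : ∀ (h : P.length - 1 < P.length), P[P.length - 1] = d := by
    intro h
    have := hd
    rw [List.getLast?_eq_getElem?, List.getElem?_eq_getElem h] at this
    simpa using this
  set m := P.length with hm
  have hidx0 : ∀ y : W, H.Adj c y → P.idxOf y ≠ 0 := by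
    intro y hy h0
    have hj : P.idxOf y < m := List.idxOf_lt_length_iff.2 (hcov y)
    have h2 : P[P.idxOf y]'hj = P[0]'(by omega) := by congr 1
    rw [List.getElem_idxOf hj, hP0 (by omega)] at h2
    subst h2
    exact H.irrefl hy
  have hidxlast : ∀ y : W, H.Adj d y → P.idxOf y ≠ m - 1 := by
    intro y hy h0
    have hj : P.idxOf y < m := List.idxOf_lt_length_iff.2 (hcov y)
    have h2 : P[P.idxOf y]'hj = P[m-1]'(by omega) := by congr 1
    rw [List.getElem_idxOf hj, hPlast (by omega)] at h2
    subst h2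
    exact H.irrefl hy
  set A := (Finset.range (m-1)).filter (fun i => H.Adj c (P.getD (i+1) c)) with hA
  set B := (Finset.range (m-1)).filter (fun i => H.Adj d (P.getD i c)) with hB
  have hAc : H.degree c ≤ A.card := by
    apply Finset.card_le_card_of_injOn (fun y => P.idxOf y - 1)
    · intro y hy
      rw [Finset.mem_coe, SimpleGraph.mem_neighborFinset] at hy
      have hj : P.idxOf y < m := List.idxOf_lt_length_iff.2 (hcov y)
      have hy0 := hidx0 y hy
      beta_reduce
      refine Finset.mem_filter.2 ⟨Finset.mem_range.2 (by omega), ?_⟩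
      have h1 : P.idxOf y - 1 + 1 = P.idxOf y := by omega
      rw [h1, List.getD_eq_getElem _ _ hj, List.getElem_idxOf hj]
      exact hy
    · intro y1 h1 y2 h2 he
      simp only [Finset.mem_coe, SimpleGraph.mem_neighborFinset] at h1 h2
      have hy01 := hidx0 y1 h1
      have hy02 := hidx0 y2 h2
      have he' : P.idxOf y1 - 1 = P.idxOf y2 - 1 := he
      have : P.idxOf y1 = P.idxOf y2 := by omega
      exact (List.idxOf_inj (hcov y1)).1 this
  have hBc : H.degree d ≤ B.card := by
    apply Finset.card_le_card_of_injOn (fun y => P.idxOf y)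
    · intro y hy
      rw [Finset.mem_coe, SimpleGraph.mem_neighborFinset] at hy
      have hj : P.idxOf y < m := List.idxOf_lt_length_iff.2 (hcov y)
      have hylast := hidxlast y hy
      beta_reduce
      refine Finset.mem_filter.2 ⟨Finset.mem_range.2 (by omega), ?_⟩
      rw [List.getD_eq_getElem _ _ hj, List.getElem_idxOf hj]
      exact hy
    · intro y1 h1 y2 h2 he
      exact (List.idxOf_inj (hcov y1)).1 he
  have hABne : (A ∩ B).Nonempty := by
    by_contra hem
    rw [Finset.not_nonempty_iff_eq_empty] at hem
    have hsub : A ∪ B ⊆ Finset.range (m-1) := by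
      intro i hi
      rcases Finset.mem_union.1 hi with h | h
      · exact Finset.mem_of_mem_filter i h
      · exact Finset.mem_of_mem_filter i h
    have := Finset.card_union_add_card_inter A B
    rw [hem] at this
    have hle : (A ∪ B).card ≤ m - 1 := le_trans (Finset.card_le_card hsub) (by simp)
    simp only [Finset.card_empty, add_zero] at this
    omega
  obtain ⟨i, hi⟩ := hABne
  rw [Finset.mem_inter, Finset.mem_filter, Finset.mem_filter, Finset.mem_range] at hi
  obtain ⟨⟨hilt, hadjc⟩, _, hadjd⟩ := hi
  have hi1 : i + 1 < m := by omega
  have hii : i < m := by omega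
  rw [List.getD_eq_getElem _ _ hi1] at hadjc
  rw [List.getD_eq_getElem _ _ hii] at hadjd
  have hperm : List.Perm (P.take (i+1) ++ (P.drop (i+1)).reverse) P := by
    calc List.Perm (P.take (i+1) ++ (P.drop (i+1)).reverse) (P.take (i+1) ++ P.drop (i+1)) :=
          List.Perm.append_left _ (List.reverse_perm _)
      _ = P := List.take_append_drop _ _
  have hdropne : P.drop (i+1) ≠ [] := by
    simp only [ne_eq, List.drop_eq_nil_iff]; omega
  have hrevne : (P.drop (i+1)).reverse ≠ [] := by simpa using hdropne
  have htakene : P.take (i+1) ≠ [] := by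
    have h5 : (P.take (i+1)).length = i + 1 := by rw [List.length_take]; omega
    intro hcon; rw [hcon] at h5; simp at h5
  refine ⟨P.take (i+1) ++ (P.drop (i+1)).reverse, ?_, ?_, ?_, ?_⟩
  · exact hperm.symm.nodup hnd
  · rw [List.isChain_append]
    refine ⟨hch.prefix (List.take_prefix _ _), ?_, ?_⟩
    · rw [List.isChain_reverse]
      have hflip : (flip H.Adj) = H.Adj := by
        ext x y; exact SimpleGraph.adj_comm H y x
      rw [show (fun a b => H.Adj b a) = H.Adj from hflip]
      exact hch.suffix (List.drop_suffix _ _)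
    · intro x hx y hy
      have htl : (P.take (i+1)).length = i + 1 := by
        rw [List.length_take]; omega
      have hxe : x = P[i]'hii := by
        have h6 : (P.take (i+1)).getLast? = some (P[i]'hii) := by
          rw [List.getLast?_eq_getElem?, htl]
          simp only [Nat.add_sub_cancel]
          rw [List.getElem?_eq_getElem (by rw [htl]; omega)]
          congr 1
          exact List.getElem_take
        rw [h6] at hx
        simp only [Option.mem_def, Option.some.injEq] at hx
        exact hx.symm
      have hye : y = d := by
        have h7 : ((P.drop (i+1)).reverse).head? = some d := by
          rw [List.head?_reverse]
          rw [List.getLast?_eq_getElem?]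
          have hlen : (P.drop (i+1)).length = m - (i+1) := by
            rw [List.length_drop]
          rw [List.getElem?_eq_getElem (by omega)]
          congr 1
          rw [List.getElem_drop]
          rw [← hPlast (by omega)]
          congr 1
          omega
        rw [h7] at hy
        simp only [Option.mem_def, Option.some.injEq] at hy
        exact hy.symm
      subst hxe hye
      exact hadjd.symm
  · intro x
    exact hperm.mem_iff.2 (hcov x)
  · intro x hx y hy
    have hxe : x = P[i+1]'hi1 := by
      have hgl : (P.take (i+1) ++ (P.drop (i+1)).reverse).getLast? =
          ((P.drop (i+1)).reverse).getLast? := List.getLast?_append_of_ne_nil _ hrevne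
      rw [hgl] at hx
      have h8 : ((P.drop (i+1)).reverse).getLast? = some (P[i+1]'hi1) := by
        rw [List.getLast?_reverse, List.head?_drop, List.getElem?_eq_getElem hi1]
      rw [h8] at hx
      simp only [Option.mem_def, Option.some.injEq] at hx
      exact hx.symm
    have hye : y = c := by
      have hhd : (P.take (i+1) ++ (P.drop (i+1)).reverse).head? = (P.take (i+1)).head? :=
        List.head?_append_of_ne_nil _ htakene
      rw [hhd] at hy
      have h9 : (P.take (i+1)).head? = some c := by
        rw [List.head?_eq_getElem?,
          List.getElem?_eq_getElem (by rw [List.length_take]; omega : 0 < (P.take (i+1)).length)]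
        congr 1
        rw [List.getElem_take]
        exact hP0 (by omega)
      rw [h9] at hy
      simp only [Option.mem_def, Option.some.injEq] at hy
      exact hy.symm
    subst hxe hye
    exact hadjc.symm

end Crossing

section Transfer
variable {W : Type*}

lemma adj_transfer {H : SimpleGraph W} {a b x y : W}
    (h : (H ⊔ SimpleGraph.fromEdgeSet {s(a,b)}).Adj x y)
    (h1 : ¬(x = a ∧ y = b)) (h2 : ¬(x = b ∧ y = a)) : H.Adj x y := by
  rcases (SimpleGraph.sup_adj _ _ _ _).1 h with h | h
  · exact h
  · exfalso
    rw [SimpleGraph.fromEdgeSet_adj] at h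
    rcases Sym2.eq_iff.1 (by simpa using h.1) with h' | h'
    · exact h1 h'
    · exact h2 h'

lemma chain_transfer {H : SimpleGraph W} {a b : W} :
    ∀ (l : List W), (∀ x ∈ l, x ≠ b) →
      l.IsChain (H ⊔ SimpleGraph.fromEdgeSet {s(a,b)}).Adj → l.IsChain H.Adj := by
  intro l
  induction l with
  | nil => intro _ _; exact List.isChain_nil
  | cons x t ih =>
    intro hb hc
    cases t with
    | nil => exact List.isChain_singleton x
    | cons y t' =>
      rw [List.isChain_cons_cons] at hc ⊢
      refine ⟨?_, ih (fun z hz => hb z (by simp [hz])) hc.2⟩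
      exact adj_transfer hc.1
        (fun h => hb y (by simp) h.2) (fun h => hb x (by simp) h.1)

lemma unuse_edge [Fintype W] [DecidableEq W] {H : SimpleGraph W} [DecidableRel H.Adj]
    {a b : W} (hab : a ≠ b) (hnadj : ¬ H.Adj a b)
    (hdeg : Fintype.card W ≤ H.degree a + H.degree b)
    (hcard : 3 ≤ Fintype.card W)
    {L : List W} (h : HCL (H ⊔ SimpleGraph.fromEdgeSet {s(a,b)}) L) : ∃ L', HCL H L' := by
  obtain ⟨T, hR⟩ := h.rot_to (h.cover b)
  have lenR : (b :: T).length = Fintype.card W := length_eq_card hR.nodup hR.cover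
  have hTne : T ≠ [] := by
    intro hcon; rw [hcon] at lenR; simp at lenR; omega
  have hbT : b ∉ T := (List.nodup_cons.1 hR.nodup).1
  have hTnodup : T.Nodup := (List.nodup_cons.1 hR.nodup).2
  obtain ⟨t0, T2, rfl⟩ : ∃ t0 T2, T = t0 :: T2 := by
    cases T with
    | nil => exact absurd rfl hTne
    | cons t0 T2 => exact ⟨t0, T2, rfl⟩
  set T := t0 :: T2 with hT
  have hTlen : 2 ≤ T.length := by
    simp only [List.length_cons] at lenR ⊢; omega
  set g := T.getLast hTne with hg
  have hgmem : g ∈ T := List.getLast_mem hTne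
  have hgb : g ≠ b := fun hh => hbT (hh ▸ hgmem)
  have hglast : (b :: T).getLast? = some g := by
    rw [hT, List.getLast?_cons_cons]
    exact List.getLast?_eq_getLast hTne
  have hadj' : (H ⊔ SimpleGraph.fromEdgeSet {s(a,b)}).Adj g b :=
    hR.closed g (by rw [hglast]; rfl) b (by simp)
  have hgt0 : g ≠ t0 := by
    have h0 : T[0]'(by omega) = t0 := rfl
    have hL : T[T.length - 1]'(by omega) = g := (List.getLast_eq_getElem hTne).symm
    intro hcon
    have : T[T.length - 1]'(by omega) = T[0]'(by omega) := by rw [hL, h0, hcon]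
    have := (hTnodup.getElem_inj_iff).1 this
    omega
  have chainTH : T.IsChain H.Adj :=
    chain_transfer T (fun x hx hxb => hbT (by rw [← hxb]; exact hx)) hR.chain.tail
  by_cases hta : t0 = a
  · -- the path T ++ [b] goes from a to b in H
    have hga : g ≠ a := hta ▸ hgt0
    have hgbH : H.Adj g b := adj_transfer hadj'
      (fun hh => hga hh.1) (fun hh => hgb hh.1)
    apply crossing (P := T ++ [b]) (c := a) (d := b)
    · exact List.nodup_append.2 ⟨hTnodup, List.nodup_singleton b,
        fun x hx y hy hxy => hbT (by rw [← List.mem_singleton.1 hy, ← hxy]; exact hx)⟩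
    · rw [List.isChain_append]
      refine ⟨chainTH, List.isChain_singleton b, ?_⟩
      intro z hz w hw
      have hzg : z = g := by
        rw [List.getLast?_eq_getLast hTne] at hz
        simpa using hz.symm
      have hwb : w = b := by simpa using hw.symm
      rw [hzg, hwb]
      exact hgbH
    · intro x
      have := hR.cover x
      rcases List.mem_cons.1 this with hh | hh
      · simp [hh]
      · simp [hh]
    · rw [← hta]; rfl
    · exact List.getLast?_concat
    · rw [← hta] at hnadj ⊢; exact fun hh => hnadj hh
    · have : (T ++ [b]).length = Fintype.card W := by
        simp only [List.length_append, List.length_singleton]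
        simp only [List.length_cons] at lenR ⊢; omega
      rw [this]; exact hdeg
  · -- t0 ≠ a : first edge of the rotated cycle is in H
    have hbt0 : H.Adj b t0 := by
      have hfirst : (H ⊔ SimpleGraph.fromEdgeSet {s(a,b)}).Adj b t0 :=
        (List.isChain_cons_cons.1 hR.chain).1
      have ht0b : t0 ≠ b := fun hh => hbT (hh ▸ List.mem_cons_self)
      exact adj_transfer hfirst (fun hh => hab hh.1.symm) (fun hh => hta hh.2)
    have chainRH : (b :: T).IsChain H.Adj := List.isChain_cons_cons.2 ⟨hbt0, chainTH⟩
    by_cases hga : g = a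
    · -- closing edge is {a,b} : Hamiltonian path from b to a in H
      apply crossing (P := b :: T) (c := b) (d := a) hR.nodup chainRH hR.cover rfl
        (by rw [hglast, hga]) (fun hh => hnadj hh.symm)
      rw [lenR] at *
      omega
    · have hgbH : H.Adj g b := adj_transfer hadj'
        (fun hh => hga hh.1) (fun hh => hgb hh.1)
      refine ⟨b :: T, hR.nodup, chainRH, hR.cover, ?_⟩
      intro z hz w hw
      have hzg : z = g := by rw [hglast] at hz; simpa using hz.symm
      have hwb : w = b := by simpa using hw.symm
      rw [hzg, hwb]
      exact hgbH

end Transfer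

section Gadget
set_option linter.unusedSectionVars false
variable {V : Type*} [Fintype V] [DecidableEq V]

/-- `G` plus an extra vertex `none` adjacent exactly to `u` and `v`. -/
def gadget (G : SimpleGraph V) (u v : V) : SimpleGraph (Option V) where
  Adj a b := match a, b with
    | none, none => False
    | none, some x => x = u ∨ x = v
    | some x, none => x = u ∨ x = v
    | some x, some y => G.Adj x y
  symm := ⟨by
    rintro (_|x) (_|y) h
    · exact h
    · exact h
    · exact h
    · exact G.adj_symm h⟩
  loopless := ⟨by
    rintro (_|x) h
    · exact h
    · exact G.irrefl h⟩

lemma gadget_some_some {G : SimpleGraph V} {u v x y : V} :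
    (gadget G u v).Adj (some x) (some y) ↔ G.Adj x y := Iff.rfl

lemma degree_le_of_gadget_le {G : SimpleGraph V} [DecidableRel G.Adj] {u v : V}
    {H : SimpleGraph (Option V)} [DecidableRel H.Adj]
    (hle : gadget G u v ≤ H) (a : V) : G.degree a ≤ H.degree (some a) := by
  apply Finset.card_le_card_of_injOn (fun y => some y)
  · intro y hy
    simp only [Finset.mem_coe, SimpleGraph.mem_neighborFinset] at hy ⊢
    exact hle (gadget_some_some.2 hy)
  · intro y1 _ y2 _ hh
    simpa using hh

lemma complete_case {G : SimpleGraph V} {u v : V} (huv : u ≠ v)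
    {H : SimpleGraph (Option V)} (hle : gadget G u v ≤ H)
    (hcomp : ∀ x y : V, x ≠ y → H.Adj (some x) (some y)) :
    ∃ L, HCL H L := by
  classical
  set mid := ((Finset.univ.erase u).erase v).toList with hmid
  set L₀ : List V := u :: (mid ++ [v]) with hL₀
  have humid : u ∉ mid := by
    simp [hmid, Finset.mem_erase]
  have hvmid : v ∉ mid := by simp [hmid, Finset.mem_erase]
  have hmidnd : mid.Nodup := Finset.nodup_toList _
  have hL₀nd : L₀.Nodup := by
    rw [hL₀, List.nodup_cons]
    constructor
    · simp only [List.mem_append, List.mem_singleton]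
      rintro (hh | hh)
      · exact humid hh
      · exact huv hh
    · exact List.nodup_append.2 ⟨hmidnd, List.nodup_singleton v,
        fun x hx y hy hxy => hvmid (by rw [← List.mem_singleton.1 hy, ← hxy]; exact hx)⟩
  have hL₀cov : ∀ x : V, x ∈ L₀ := by
    intro x
    rw [hL₀]
    by_cases hxu : x = u
    · simp [hxu]
    · by_cases hxv : x = v
      · simp [hxv]
      · have : x ∈ mid := by
          rw [hmid, Finset.mem_toList]
          exact Finset.mem_erase.2 ⟨hxv, Finset.mem_erase.2 ⟨hxu, Finset.mem_univ x⟩⟩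
        simp [this]
  refine ⟨none :: L₀.map some, ?_, ?_, ?_, ?_⟩
  · rw [List.nodup_cons]
    exact ⟨by simp, (List.nodup_map_iff (Option.some_injective V)).2 hL₀nd⟩
  · rw [List.isChain_cons]
    constructor
    · intro y hy
      have : y = some u := by
        rw [hL₀] at hy; simp at hy; simp [hy]
      rw [this]
      exact hle (show (gadget G u v).Adj none (some u) from Or.inl rfl)
    · rw [List.isChain_map]
      have hpw : L₀.Pairwise (· ≠ ·) := hL₀nd
      exact (hpw.imp (fun {x y} hxy => hcomp x y hxy)).isChain
  · rintro (_ | x)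
    · simp
    · simp only [List.mem_cons, List.mem_map]
      exact Or.inr ⟨x, hL₀cov x, rfl⟩
  · intro z hz w hw
    have hwn : w = none := by simpa using hw.symm
    have hzv : z = some v := by
      have : (none :: L₀.map some).getLast? = some (some v) := by
        have h1 : none :: L₀.map some = (none :: some u :: mid.map some) ++ [some v] := by
          rw [hL₀]; simp
        rw [h1, List.getLast?_concat]
      rw [this] at hz
      simpa using hz.symm
    rw [hzv, hwn]
    exact hle (show (gadget G u v).Adj (some v) none from Or.inr rfl)

end Gadget

section MainInd
set_option linter.unusedSectionVars false
variable {V : Type*} [Fintype V] [DecidableEq V]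

lemma eq_map_some : ∀ (l : List (Option V)), (∀ x ∈ l, x ≠ none) →
    ∃ M : List V, l = M.map some := by
  intro l
  induction l with
  | nil => exact fun _ => ⟨[], rfl⟩
  | cons x t ih =>
    intro h
    obtain ⟨M, hM⟩ := ih (fun z hz => h z (by simp [hz]))
    cases x with
    | none => exact absurd rfl (h none (by simp))
    | some y => exact ⟨y :: M, by simp [hM]⟩

lemma main_ind (G : SimpleGraph V) [DecidableRel G.Adj] (u v : V) (huv : u ≠ v)
    (hn : 3 ≤ Fintype.card V) (hδ : Fintype.card V + 1 ≤ 2 * G.minDegree) :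
    ∀ (k : ℕ) (H : SimpleGraph (Option V)), gadget G u v ≤ H →
      Hᶜ.edgeSet.ncard ≤ k → ∃ L, HCL H L := by
  intro k
  induction k with
  | zero =>
    intro H hle hcard
    by_cases hcomp : ∀ x y : V, x ≠ y → H.Adj (some x) (some y)
    · exact complete_case huv hle hcomp
    · exfalso
      push_neg at hcomp
      obtain ⟨a, b, hab, hnadj⟩ := hcomp
      have hedge : s(some a, some b) ∈ Hᶜ.edgeSet := by
        rw [SimpleGraph.mem_edgeSet, SimpleGraph.compl_adj]
        exact ⟨by simpa using hab, hnadj⟩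
      have h0 : Hᶜ.edgeSet.ncard = 0 := le_antisymm hcard (Nat.zero_le _)
      rw [Set.ncard_eq_zero (Set.toFinite _)] at h0
      rw [h0] at hedge
      exact hedge
  | succ k ih =>
    intro H hle hcard
    classical
    by_cases hcomp : ∀ x y : V, x ≠ y → H.Adj (some x) (some y)
    · exact complete_case huv hle hcomp
    · push_neg at hcomp
      obtain ⟨a, b, hab, hnadj⟩ := hcomp
      set H' := H ⊔ SimpleGraph.fromEdgeSet {s(some a, some b)} with hH'
      have hsub : H'ᶜ.edgeSet ⊂ Hᶜ.edgeSet := by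
        constructor
        · intro e he
          induction e with
          | h x y =>
            rw [SimpleGraph.mem_edgeSet, SimpleGraph.compl_adj] at he ⊢
            exact ⟨he.1, fun hadj => he.2 (le_sup_left (b := SimpleGraph.fromEdgeSet
              {s(some a, some b)}) hadj)⟩
        · intro hsub2
          have hedge : s(some a, some b) ∈ Hᶜ.edgeSet := by
            rw [SimpleGraph.mem_edgeSet, SimpleGraph.compl_adj]
            exact ⟨by simpa using hab, hnadj⟩
          have := hsub2 hedge
          rw [SimpleGraph.mem_edgeSet, SimpleGraph.compl_adj] at this
          apply this.2
          apply le_sup_right (a := H)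
          rw [SimpleGraph.fromEdgeSet_adj]
          exact ⟨by simp, by simpa using hab⟩
      have hlt : H'ᶜ.edgeSet.ncard ≤ k := by
        have := Set.ncard_lt_ncard hsub (Set.toFinite _)
        omega
      obtain ⟨L, hL⟩ := ih H' (le_trans hle le_sup_left) hlt
      have hdeg : Fintype.card (Option V) ≤ H.degree (some a) + H.degree (some b) := by
        have h1 : G.degree a ≤ H.degree (some a) := degree_le_of_gadget_le hle a
        have h2 : G.degree b ≤ H.degree (some b) := degree_le_of_gadget_le hle b
        have h3 : G.minDegree ≤ G.degree a := G.minDegree_le_degree a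
        have h4 : G.minDegree ≤ G.degree b := G.minDegree_le_degree b
        rw [Fintype.card_option]
        omega
      exact unuse_edge (by simpa using hab) hnadj hdeg
        (by rw [Fintype.card_option]; omega) hL

lemma extract (G : SimpleGraph V) [DecidableRel G.Adj] {u v : V} (huv : u ≠ v)
    (hn : 3 ≤ Fintype.card V) {L : List (Option V)} (h : HCL (gadget G u v) L) :
    ∃ p : G.Walk u v, p.IsHamiltonian := by
  obtain ⟨T, hR⟩ := h.rot_to (h.cover none)
  have lenR : (none :: T).length = Fintype.card (Option V) :=
    length_eq_card hR.nodup hR.cover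
  rw [Fintype.card_option] at lenR
  simp only [List.length_cons] at lenR
  have hnT : none ∉ T := (List.nodup_cons.1 hR.nodup).1
  obtain ⟨M, rfl⟩ := eq_map_some T (fun x hx hxn => hnT (by rw [← hxn]; exact hx))
  have hMnd : M.Nodup :=
    (List.nodup_map_iff (Option.some_injective V)).1 (List.nodup_cons.1 hR.nodup).2
  have hMcov : ∀ x : V, x ∈ M := by
    intro x
    have hx := hR.cover (some x)
    rcases List.mem_cons.1 hx with hh | hh
    · exact absurd hh (by simp)
    · simpa using hh
  have hMlen : M.length = Fintype.card V := by
    simpa using lenR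
  obtain ⟨m0, M', rfl⟩ : ∃ m0 M', M = m0 :: M' := by
    cases M with
    | nil => simp at hMlen; omega
    | cons m0 M' => exact ⟨m0, M', rfl⟩
  set M := m0 :: M' with hM
  have hMne : M ≠ [] := by simp [hM]
  have hMchain : M.IsChain G.Adj := by
    have hc := hR.chain.tail
    simp only [List.tail_cons] at hc
    rw [List.isChain_map] at hc
    exact hc
  set g := M.getLast hMne with hg
  have hh0 : m0 = u ∨ m0 = v := by
    have hc := (List.isChain_cons.1 hR.chain).1
    have := hc (some m0) (by simp [hM])
    exact this
  have hgl : (none :: M.map some).getLast? = some (some g) := by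
    have h1 : M.map some = some m0 :: M'.map some := by simp [hM]
    rw [h1, List.getLast?_cons_cons, ← h1]
    rw [List.getLast?_map]
    rw [List.getLast?_eq_getLast hMne]
    rfl
  have hgu : g = u ∨ g = v := by
    have := hR.closed (some g) (by rw [hgl]; rfl) none (by simp)
    exact this
  have hMlen2 : 2 ≤ M.length := by omega
  have hgm0 : g ≠ m0 := by
    have hL2 : M[M.length - 1]'(by omega) = g := (List.getLast_eq_getElem hMne).symm
    have h02 : M[0]'(by omega) = m0 := rfl
    intro hcon
    have : M[M.length - 1]'(by omega) = M[0]'(by omega) := by rw [hL2, h02, hcon]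
    have := hMnd.getElem_inj_iff.1 this
    omega
  have hflip : (flip G.Adj) = G.Adj := by
    ext x y; exact SimpleGraph.adj_comm G y x
  rcases hh0 with h0u | h0v
  · have hgv : g = v := by
      rcases hgu with hh | hh
      · exact absurd (hh.trans h0u.symm) hgm0
      · exact hh
    obtain ⟨p, hp⟩ := exists_walk M u v (by rw [← h0u]; rfl)
      (by rw [List.getLast?_eq_getLast hMne, ← hgv]) hMchain
    refine ⟨p, SimpleGraph.Walk.IsPath.isHamiltonian_of_mem ?_ ?_⟩
    · rw [SimpleGraph.Walk.isPath_def, hp]; exact hMnd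
    · intro w; rw [hp]; exact hMcov w
  · have hgu' : g = u := by
      rcases hgu with hh | hh
      · exact hh
      · exact absurd (hh.trans h0v.symm) hgm0
    have s1 : M.reverse.head? = some u := by
      rw [List.head?_reverse, List.getLast?_eq_getLast hMne, ← hgu']
    have s2 : M.reverse.getLast? = some v := by
      rw [List.getLast?_reverse, ← h0v]
      rfl
    have s3 : M.reverse.IsChain G.Adj := by
      rw [List.isChain_reverse, show (fun a b => G.Adj b a) = G.Adj from hflip]; exact hMchain
    obtain ⟨p, hp⟩ := exists_walk M.reverse u v s1 s2 s3
    refine ⟨p, SimpleGraph.Walk.IsPath.isHamiltonian_of_mem ?_ ?_⟩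
    · rw [SimpleGraph.Walk.isPath_def, hp]; exact List.nodup_reverse.2 hMnd
    · intro w; rw [hp]; simpa using hMcov w

end MainInd


theorem dirac_hamiltonian_connected (G : SimpleGraph V) [DecidableRel G.Adj]
    (hn : 3 ≤ Fintype.card V)
    (hδ : ((Fintype.card V : ℝ) + 1) / 2 ≤ (G.minDegree : ℝ)) :
    G.IsHamiltonianConnected := by
  intro u v huv
  have hδ' : Fintype.card V + 1 ≤ 2 * G.minDegree := by
    have h2 : ((Fintype.card V : ℝ) + 1) ≤ 2 * (G.minDegree : ℝ) := by linarith
    exact_mod_cast h2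
  obtain ⟨L, hL⟩ := main_ind G u v huv hn hδ' ((gadget G u v)ᶜ.edgeSet.ncard)
    (gadget G u v) le_rfl le_rfl
  exact extract G huv hn hL
end

section
/- If G is a graph on n ≥ 3 vertices with minimum degree δ(G) ≥ n/2, then G is Hamiltonian. -/
open SimpleGraph Finset Matrix

variable {V : Type*} [Fintype V] [DecidableEq V]

section DiracAuxSection
namespace DiracAux
set_option linter.unusedSectionVars false
variable {V : Type*} [Fintype V] [DecidableEq V] {G : SimpleGraph V}


lemma loop_path_nil {u : V} {p : G.Walk u u} (hp : p.IsPath) : p = SimpleGraph.Walk.nil := by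
  cases p with
  | nil => rfl
  | cons h q =>
    rw [SimpleGraph.Walk.cons_isPath_iff] at hp
    exact absurd q.end_mem_support hp.2

lemma getVert_injOn {u v : V} {p : G.Walk u v} (hp : p.IsPath) :
    ∀ i ≤ p.length, ∀ j ≤ p.length, p.getVert i = p.getVert j → i = j := by
  induction p with
  | nil => intro i hi j hj _; simp only [SimpleGraph.Walk.length_nil, Nat.le_zero] at hi hj; omega
  | cons h q ih =>
    rw [SimpleGraph.Walk.cons_isPath_iff] at hp
    intro i hi j hj hij
    match i, j with
    | 0, 0 => rfl
    | 0, j + 1 =>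
      exfalso
      rw [SimpleGraph.Walk.getVert_zero, SimpleGraph.Walk.getVert_cons_succ] at hij
      exact hp.2 (SimpleGraph.Walk.mem_support_iff_exists_getVert.2
        ⟨j, hij.symm, by simpa using hj⟩)
    | i + 1, 0 =>
      exfalso
      rw [SimpleGraph.Walk.getVert_zero, SimpleGraph.Walk.getVert_cons_succ] at hij
      exact hp.2 (SimpleGraph.Walk.mem_support_iff_exists_getVert.2
        ⟨i, hij, by simpa using hi⟩)
    | i + 1, j + 1 =>
      rw [SimpleGraph.Walk.getVert_cons_succ, SimpleGraph.Walk.getVert_cons_succ] at hij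
      have := ih hp.1 i (by simpa using hi) j (by simpa using hj) hij
      omega

lemma edge_ends_not_mem {u v : V} {p : G.Walk u v} (hp : p.IsPath) (h2 : 2 ≤ p.length) :
    s(u, v) ∉ p.edges := by
  cases p with
  | nil => simp
  | cons h q =>
    rw [SimpleGraph.Walk.cons_isPath_iff] at hp
    intro hmem
    rw [SimpleGraph.Walk.edges_cons, List.mem_cons] at hmem
    rcases hmem with heq | hmem
    · rw [Sym2.eq_iff] at heq
      rcases heq with ⟨-, h2'⟩ | ⟨h1', -⟩
      · -- v = snd vertex, so q : Walk v v is a path → nil → length small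
        subst h2'
        have : q = SimpleGraph.Walk.nil := loop_path_nil hp.1
        subst this
        simp at h2
      · exact G.irrefl (h1' ▸ h)
    · exact hp.2 (q.fst_mem_support_of_mem_edges hmem)





lemma walk_split {u v : V} (p : G.Walk u v) :
    ∀ i ≤ p.length, ∃ (x : V) (q : G.Walk u x) (r : G.Walk x v),
      p = q.append r ∧ q.length = i := by
  induction p with
  | nil =>
    intro i hi
    simp only [SimpleGraph.Walk.length_nil, Nat.le_zero] at hi
    subst hi
    exact ⟨_, SimpleGraph.Walk.nil, SimpleGraph.Walk.nil, rfl, rfl⟩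
  | cons h q ih =>
    intro i hi
    match i with
    | 0 => exact ⟨_, SimpleGraph.Walk.nil, SimpleGraph.Walk.cons h q, rfl, rfl⟩
    | i + 1 =>
      obtain ⟨x, q', r', heq, hlen⟩ := ih i (by simpa using hi)
      exact ⟨x, SimpleGraph.Walk.cons h q', r',
        by rw [SimpleGraph.Walk.cons_append, ← heq], by simp [hlen]⟩

lemma rotation {u v : V} {p : G.Walk u v} (hp : p.IsPath) (h2 : 2 ≤ p.length) {i : ℕ}
    (hi : i < p.length) (h1 : G.Adj u (p.getVert (i + 1))) (hvx : G.Adj v (p.getVert i)) :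
    ∃ c : G.Walk u u, c.IsCycle ∧ c.length = p.length + 1 ∧
      (∀ z, z ∈ c.support ↔ z ∈ p.support) := by
  classical
  obtain ⟨x, q, r, heq, hqlen⟩ := walk_split p i hi.le
  subst heq
  rw [SimpleGraph.Walk.length_append] at h2 hi
  have hrnil : ¬ r.Nil := by
    rw [SimpleGraph.Walk.not_nil_iff_lt_length]; omega
  have hgx : (q.append r).getVert i = x := by
    rw [SimpleGraph.Walk.getVert_append]
    simp [hqlen]
  have hgy : (q.append r).getVert (i + 1) = r.getVert 1 := by
    rw [SimpleGraph.Walk.getVert_append]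
    simp [hqlen]
  rw [hgy] at h1
  rw [hgx] at hvx
  set P : G.Walk u (r.getVert 1) :=
    q.append (SimpleGraph.Walk.cons hvx.symm r.tail.reverse) with hPdef
  have hsupp_p : (q.append r).support = q.support ++ r.support.tail :=
    SimpleGraph.Walk.support_append q r
  have hsupp_P : P.support = q.support ++ (r.support.tail).reverse := by
    rw [hPdef, SimpleGraph.Walk.support_append, SimpleGraph.Walk.support_cons, List.tail_cons,
      SimpleGraph.Walk.support_reverse, SimpleGraph.Walk.support_tail_of_not_nil r hrnil]
  have hperm : List.Perm P.support (q.append r).support := by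
    rw [hsupp_P, hsupp_p]
    exact (List.reverse_perm _).append_left _
  have hnodup_p : (q.append r).support.Nodup := hp.support_nodup
  have hPpath : P.IsPath := by
    rw [SimpleGraph.Walk.isPath_def]
    exact hperm.nodup_iff.mpr hnodup_p
  have hdisj : List.Disjoint q.support r.support.tail := by
    have h' := hnodup_p
    rw [hsupp_p, List.nodup_append] at h'
    exact fun a ha hb => h'.2.2 a ha a hb rfl
  have huq : u ∈ q.support := q.start_mem_support
  have hyr : r.getVert 1 ∈ r.support.tail := by
    rw [← SimpleGraph.Walk.support_tail_of_not_nil r hrnil]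
    exact r.tail.start_mem_support
  have huv : u ≠ v := by
    intro h
    have := getVert_injOn hp 0 (by omega) (q.append r).length le_rfl
      (by rw [SimpleGraph.Walk.getVert_zero, SimpleGraph.Walk.getVert_length, h])
    rw [SimpleGraph.Walk.length_append] at this
    omega
  have hedge : s(u, r.getVert 1) ∉ P.edges := by
    intro hmem
    rw [hPdef, SimpleGraph.Walk.edges_append, SimpleGraph.Walk.edges_cons, List.mem_append,
      List.mem_cons] at hmem
    rcases hmem with hq | hcv | hr
    · exact hdisj (q.snd_mem_support_of_mem_edges hq) hyr
    · rw [Sym2.eq_iff] at hcv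
      rcases hcv with ⟨hux, hyv⟩ | ⟨huv', -⟩
      · have hi0 : i = 0 := getVert_injOn hp i (by rw [SimpleGraph.Walk.length_append]; omega) 0 (by omega)
          (by rw [SimpleGraph.Walk.getVert_zero, hgx, ← hux])
        have hi1 : i + 1 = (q.append r).length :=
          getVert_injOn hp (i + 1) (by rw [SimpleGraph.Walk.length_append]; omega)
            (q.append r).length le_rfl
            (by rw [SimpleGraph.Walk.getVert_length, hgy, hyv])
        rw [SimpleGraph.Walk.length_append] at hi1
        omega
      · exact huv huv'
    · rw [SimpleGraph.Walk.edges_reverse, List.mem_reverse] at hr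
      have := r.tail.fst_mem_support_of_mem_edges hr
      rw [SimpleGraph.Walk.support_tail_of_not_nil r hrnil] at this
      exact hdisj huq this
  refine ⟨SimpleGraph.Walk.cons h1 P.reverse, ?_, ?_, ?_⟩
  · rw [SimpleGraph.Walk.cons_isCycle_iff]
    refine ⟨hPpath.reverse, ?_⟩
    rw [SimpleGraph.Walk.edges_reverse, List.mem_reverse]
    exact hedge
  · have htl : r.tail.length + 1 = r.length := SimpleGraph.Walk.length_tail_add_one hrnil
    simp only [SimpleGraph.Walk.length_cons, SimpleGraph.Walk.length_reverse, hPdef,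
      SimpleGraph.Walk.length_append]
    omega
  · intro z
    rw [SimpleGraph.Walk.support_cons, List.mem_cons, SimpleGraph.Walk.support_reverse,
      List.mem_reverse, ← hperm.mem_iff]
    constructor
    · rintro (rfl | hz)
      · rw [hperm.mem_iff, hsupp_p]; exact List.mem_append_left _ huq
      · exact hz
    · intro hz; right; exact hz




lemma crossing {a b : V} (W : G.Walk a b) (S : List V) (ha : a ∉ S) (hb : b ∈ S) :
    ∃ s t, G.Adj s t ∧ s ∉ S ∧ t ∈ S := by
  induction W with
  | nil => exact absurd hb ha
  | @cons a c b h W ih =>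
    by_cases hc : c ∈ S
    · exact ⟨a, c, h, ha, hc⟩
    · exact ih hc hb

lemma mem_tail_of_closed {a : V} (c : G.Walk a a) (hn : ¬c.Nil) {z : V}
    (hz : z ∈ c.support) : z ∈ c.support.tail := by
  rw [← SimpleGraph.Walk.support_tail_of_not_nil c hn]
  rw [SimpleGraph.Walk.support_eq_cons, List.mem_cons] at hz
  rcases hz with rfl | hz
  · exact c.tail.end_mem_support
  · rwa [SimpleGraph.Walk.support_tail_of_not_nil c hn]

lemma deg_sum [DecidableRel G.Adj] (hδ : (Fintype.card V : ℝ) / 2 ≤ (G.minDegree : ℝ))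
    (w : V) : Fintype.card V ≤ 2 * G.degree w := by
  have h1 : (Fintype.card V : ℝ) ≤ 2 * G.minDegree := by linarith
  have h2 : Fintype.card V ≤ 2 * G.minDegree := by exact_mod_cast h1
  have := G.minDegree_le_degree w
  omega

lemma preconnected (hn : 3 ≤ Fintype.card V) [DecidableRel G.Adj]
    (hdeg : ∀ w, Fintype.card V ≤ 2 * G.degree w) : G.Preconnected := by
  intro a b
  rcases eq_or_ne a b with rfl | hab
  · rfl
  by_cases hadj : G.Adj a b
  · exact hadj.reachable
  have hsub : ∀ w, G.neighborFinset w ⊆ (univ : Finset V) \ {a, b} ∨ True := fun _ => Or.inr trivial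
  have hNa : G.neighborFinset a ⊆ (univ : Finset V) \ {a, b} := by
    intro z hz
    rw [mem_neighborFinset] at hz
    simp only [mem_sdiff, mem_univ, true_and, mem_insert, mem_singleton]
    push_neg
    exact ⟨fun h => G.irrefl (h ▸ hz), fun h => hadj (h ▸ hz)⟩
  have hNb : G.neighborFinset b ⊆ (univ : Finset V) \ {a, b} := by
    intro z hz
    rw [mem_neighborFinset] at hz
    simp only [mem_sdiff, mem_univ, true_and, mem_insert, mem_singleton]
    push_neg
    refine ⟨fun h => hadj (h ▸ hz).symm, fun h => G.irrefl (h ▸ hz)⟩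
  have hcard : ((univ : Finset V) \ {a, b}).card = Fintype.card V - 2 := by
    rw [card_sdiff_of_subset (by simp), card_univ]
    congr 1
    rw [card_insert_of_notMem (by simpa using hab), card_singleton]
  have hnd : ¬ Disjoint (G.neighborFinset a) (G.neighborFinset b) := by
    intro hd
    have := card_union_of_disjoint hd
    have hle : (G.neighborFinset a ∪ G.neighborFinset b).card ≤ Fintype.card V - 2 :=
      hcard ▸ card_le_card (union_subset hNa hNb)
    have ha' := hdeg a
    have hb' := hdeg b
    rw [← card_neighborFinset_eq_degree] at ha' hb'
    omega
  obtain ⟨z, hza, hzb⟩ := not_disjoint_iff.mp hnd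
  rw [mem_neighborFinset] at hza hzb
  exact (hza.reachable).trans hzb.symm.reachable




lemma exists_cross_index [DecidableRel G.Adj] {u v : V} {p : G.Walk u v} (hp : p.IsPath)
    (hNu : ∀ w, G.Adj u w → w ∈ p.support) (hNv : ∀ w, G.Adj v w → w ∈ p.support)
    (hsum : Fintype.card V ≤ G.degree u + G.degree v) :
    ∃ i, i < p.length ∧ G.Adj u (p.getVert (i + 1)) ∧ G.Adj v (p.getVert i) := by
  classical
  set A := (Finset.range p.length).filter (fun i => G.Adj u (p.getVert (i + 1))) with hA
  set B := (Finset.range p.length).filter (fun i => G.Adj v (p.getVert i)) with hB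
  have hcardA : A.card = G.degree u := by
    rw [← card_neighborFinset_eq_degree]
    apply Finset.card_bij (fun i _ => p.getVert (i + 1))
    · intro i hi
      rw [hA, mem_filter] at hi
      exact (mem_neighborFinset _ _ _).2 hi.2
    · intro i hi j hj h
      rw [hA, mem_filter, mem_range] at hi hj
      have := getVert_injOn hp (i + 1) (by omega) (j + 1) (by omega) h
      omega
    · intro w hw
      rw [mem_neighborFinset] at hw
      obtain ⟨n, hgv, hn⟩ := SimpleGraph.Walk.mem_support_iff_exists_getVert.1 (hNu w hw)
      have hn0 : n ≠ 0 := by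
        rintro rfl
        rw [SimpleGraph.Walk.getVert_zero] at hgv
        exact G.irrefl (hgv ▸ hw)
      refine ⟨n - 1, ?_, ?_⟩
      · rw [hA, mem_filter, mem_range]
        have : n - 1 + 1 = n := by omega
        rw [this, hgv]
        exact ⟨by omega, hw⟩
      · have : n - 1 + 1 = n := by omega
        rw [this, hgv]
  have hcardB : B.card = G.degree v := by
    rw [← card_neighborFinset_eq_degree]
    apply Finset.card_bij (fun i _ => p.getVert i)
    · intro i hi
      rw [hB, mem_filter] at hi
      exact (mem_neighborFinset _ _ _).2 hi.2
    · intro i hi j hj h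
      rw [hB, mem_filter, mem_range] at hi hj
      exact getVert_injOn hp i (by omega) j (by omega) h
    · intro w hw
      rw [mem_neighborFinset] at hw
      obtain ⟨n, hgv, hn⟩ := SimpleGraph.Walk.mem_support_iff_exists_getVert.1 (hNv w hw)
      have hnl : n ≠ p.length := by
        rintro rfl
        rw [SimpleGraph.Walk.getVert_length] at hgv
        exact G.irrefl (hgv ▸ hw)
      refine ⟨n, ?_, hgv⟩
      rw [hB, mem_filter, mem_range]
      exact ⟨by omega, hgv ▸ hw⟩
  have hlt : p.length < Fintype.card V := hp.length_lt
  have hne : (A ∩ B).Nonempty := by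
    by_contra hemp
    rw [not_nonempty_iff_eq_empty, ← Finset.disjoint_iff_inter_eq_empty] at hemp
    have h1 := Finset.card_union_of_disjoint hemp
    have h2 : (A ∪ B).card ≤ p.length := by
      have : A ∪ B ⊆ Finset.range p.length := by
        apply Finset.union_subset <;>
          · intro i hi
            simp only [hA, hB, mem_filter] at hi
            exact hi.1
      simpa using card_le_card this
    omega
  obtain ⟨i, hiAB⟩ := hne
  rw [mem_inter, hA, hB, mem_filter, mem_filter, mem_range] at hiAB
  exact ⟨i, hiAB.1.1, hiAB.1.2, hiAB.2.2⟩




lemma length_rotate {a t : V} (c : G.Walk a a) (h : t ∈ c.support) :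
    (c.rotate t h).length = c.length := by
  rw [SimpleGraph.Walk.rotate, SimpleGraph.Walk.length_append, Nat.add_comm,
    ← SimpleGraph.Walk.length_append, SimpleGraph.Walk.take_spec]

theorem dirac_main [DecidableRel G.Adj] (hn : 3 ≤ Fintype.card V)
    (hδ : (Fintype.card V : ℝ) / 2 ≤ (G.minDegree : ℝ)) : G.IsHamiltonian := by
  intro _
  have hdeg : ∀ w, Fintype.card V ≤ 2 * G.degree w := deg_sum hδ
  have hpre : G.Preconnected := preconnected hn hdeg
  haveI : Nonempty V := Fintype.card_pos_iff.mp (by omega)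
  haveI : Nonempty (Σ u : V, Σ v : V, G.Path u v) := by
    obtain ⟨w⟩ := ‹Nonempty V›
    exact ⟨⟨w, w, ⟨SimpleGraph.Walk.nil, SimpleGraph.Walk.IsPath.nil⟩⟩⟩
  obtain ⟨⟨u, v, p₀⟩, hmax⟩ :=
    Finite.exists_max (fun q : Σ u : V, Σ v : V, G.Path u v => q.2.2.val.length)
  obtain ⟨p, hp⟩ := p₀
  have hmaxlen : ∀ {a b : V} (q : G.Walk a b), q.IsPath → q.length ≤ p.length := by
    intro a b q hq
    exact hmax ⟨a, b, ⟨q, hq⟩⟩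
  have hNu : ∀ w, G.Adj u w → w ∈ p.support := by
    intro w hw
    by_contra hws
    have := hmaxlen (SimpleGraph.Walk.cons hw.symm p) (hp.cons hws)
    simp at this
  have hNv : ∀ w, G.Adj v w → w ∈ p.support := by
    intro w hw
    by_contra hws
    have hws' : w ∉ p.reverse.support := by
      rwa [SimpleGraph.Walk.support_reverse, List.mem_reverse]
    have := hmaxlen (SimpleGraph.Walk.cons hw.symm p.reverse) (hp.reverse.cons hws')
    simp at this
  have hdegu : G.degree u ≤ p.length := by
    have hsub : G.neighborFinset u ⊆ p.support.toFinset.erase u := by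
      intro z hz
      rw [mem_neighborFinset] at hz
      rw [mem_erase, List.mem_toFinset]
      exact ⟨fun h => G.irrefl (h ▸ hz), hNu z hz⟩
    have h1 := card_le_card hsub
    rw [card_erase_of_mem (by rw [List.mem_toFinset]; exact p.start_mem_support),
      List.toFinset_card_of_nodup hp.support_nodup, SimpleGraph.Walk.length_support] at h1
    rw [← card_neighborFinset_eq_degree]
    omega
  have hlen2 : 2 ≤ p.length := by have := hdeg u; omega
  obtain ⟨i, hi, h1, h2⟩ := exists_cross_index hp hNu hNv (by have := hdeg u; have := hdeg v; omega)
  obtain ⟨c, hc, hclen, hcsupp⟩ := rotation hp hlen2 hi h1 h2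
  have hall : ∀ z, z ∈ p.support := by
    by_contra hz
    push_neg at hz
    obtain ⟨z, hz⟩ := hz
    obtain ⟨W⟩ := hpre z u
    obtain ⟨s, t, hst, hsS, htS⟩ := crossing W p.support hz p.start_mem_support
    have htc : t ∈ c.support := (hcsupp t).2 htS
    set c' := c.rotate t htc with hc'def
    have hc' : c'.IsCycle := hc.rotate htc
    have hc'nil : ¬ c'.Nil := hc'.not_nil
    have hc'sub : ∀ y, y ∈ c'.support → y ∈ p.support := by
      intro y hy
      rw [SimpleGraph.Walk.support_eq_cons, List.mem_cons] at hy
      rcases hy with rfl | hy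
      · exact htS
      · have := (SimpleGraph.Walk.support_rotate c t htc).mem_iff.mp hy
        exact (hcsupp y).1 (List.mem_of_mem_tail this)
    have hrep := SimpleGraph.Walk.cons_tail_eq c' hc'nil
    have htail_path : c'.tail.IsPath := by
      have h' := hc'
      rw [← hrep, SimpleGraph.Walk.cons_isCycle_iff] at h'
      exact h'.1
    have hsnot : s ∉ c'.tail.reverse.support := by
      rw [SimpleGraph.Walk.support_reverse, List.mem_reverse]
      intro hmem
      apply hsS
      apply hc'sub
      rw [← hrep, SimpleGraph.Walk.support_cons]
      exact List.mem_cons_of_mem _ hmem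
    have hnewpath : (SimpleGraph.Walk.cons hst c'.tail.reverse).IsPath :=
      htail_path.reverse.cons hsnot
    have hlennew := hmaxlen _ hnewpath
    rw [SimpleGraph.Walk.length_cons, SimpleGraph.Walk.length_reverse] at hlennew
    have htl : c'.tail.length + 1 = c'.length := SimpleGraph.Walk.length_tail_add_one hc'nil
    have hrot : c'.length = c.length := length_rotate c htc
    omega
  refine ⟨u, c, ?_⟩
  rw [SimpleGraph.Walk.isHamiltonianCycle_isCycle_and_isHamiltonian_tail]
  refine ⟨hc, ?_⟩
  intro a
  rw [SimpleGraph.Walk.support_tail_of_not_nil c hc.not_nil]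
  exact List.count_eq_one_of_mem hc.support_nodup
    (mem_tail_of_closed c hc.not_nil ((hcsupp a).2 (hall a)))

end DiracAux
end DiracAuxSection

theorem dirac_hamiltonian (G : SimpleGraph V) [DecidableRel G.Adj]
    (hn : 3 ≤ Fintype.card V)
    (hδ : (Fintype.card V : ℝ) / 2 ≤ (G.minDegree : ℝ)) :
    G.IsHamiltonian := by
  exact DiracAux.dirac_main hn hδ
end

section
/- If G is a graph on n ≥ 3 vertices with minimum degree δ(G) ≥ (n-1)/2, then G is traceable, i.e., contains a Hamiltonian path. -/
open SimpleGraph Finset Matrix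

variable {V : Type*} [Fintype V] [DecidableEq V]

lemma walk_of_chain (G : SimpleGraph V) :
    ∀ (l : List V), l.Chain' G.Adj → l ≠ [] →
      ∃ (u v : V) (p : G.Walk u v), p.support = l := by
  intro l
  induction l with
  | nil => simp
  | cons a t ih =>
    intro hc _
    match t, hc with
    | [], _ => exact ⟨a, a, Walk.nil, rfl⟩
    | b :: t', hc =>
      obtain ⟨hab, hc'⟩ := List.isChain_cons_cons.mp hc
      obtain ⟨u, v, p, hp⟩ := ih hc' (by simp)
      have hu : u = b := by
        have := p.support_eq_cons
        rw [hp] at this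
        exact (List.cons.injEq _ _ _ _).mp this |>.1.symm
      subst hu
      exact ⟨a, v, Walk.cons hab p, by simp [hp]⟩

lemma common_nbr (G : SimpleGraph V) [DecidableRel G.Adj]
    (hdeg : ∀ v, Fintype.card V ≤ 2 * G.degree v + 1)
    {u a : V} (hne : u ≠ a) (hna : ¬ G.Adj u a) :
    ∃ y, G.Adj u y ∧ G.Adj a y := by
  set n := Fintype.card V with hn
  have hpair : ({u, a} : Finset V).card = 2 := by
    rw [card_insert_of_notMem (by simp [hne]), card_singleton]
  have hn2 : 2 ≤ n := hpair ▸ card_le_univ ({u, a} : Finset V)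
  have hsub : G.neighborFinset u ∪ G.neighborFinset a ⊆ univ \ {u, a} := by
    intro y hy
    simp only [mem_union, mem_neighborFinset] at hy
    simp only [mem_sdiff, mem_univ, mem_insert, mem_singleton, true_and, not_or]
    rcases hy with h | h
    · exact ⟨fun e => G.irrefl (e ▸ h), fun e => hna (e ▸ h)⟩
    · exact ⟨fun e => hna (e ▸ h.symm), fun e => G.irrefl (e ▸ h)⟩
  have hcard2 : (univ \ ({u, a} : Finset V)).card = n - 2 := by
    rw [card_sdiff_of_subset (subset_univ _), hpair, card_univ]
  have h1 : (G.neighborFinset u ∪ G.neighborFinset a).card ≤ n - 2 :=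
    hcard2 ▸ card_le_card hsub
  have h2 := card_union_add_card_inter (G.neighborFinset u) (G.neighborFinset a)
  rw [card_neighborFinset_eq_degree, card_neighborFinset_eq_degree] at h2
  have hd1 := hdeg u; have hd2 := hdeg a
  have : 0 < (G.neighborFinset u ∩ G.neighborFinset a).card := by omega
  obtain ⟨y, hy⟩ := card_pos.mp this
  simp only [mem_inter, mem_neighborFinset] at hy
  exact ⟨y, hy.1, hy.2⟩

lemma extend_chain (G : SimpleGraph V) [DecidableRel G.Adj]
    (hdeg : ∀ v, Fintype.card V ≤ 2 * G.degree v + 1)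
    (l : List V) (hnd : l.Nodup) (hc : l.Chain' G.Adj) (hne : l ≠ [])
    (hlt : l.length < Fintype.card V) :
    ∃ l' : List V, l'.Nodup ∧ l'.Chain' G.Adj ∧ l'.length = l.length + 1 := by
  classical
  set n := Fintype.card V with hn
  set m := l.length with hm
  set a := l.head hne with ha
  set b := l.getLast hne with hb
  have hm1 : 1 ≤ m := List.length_pos_iff.mpr hne
  have hal : a ∈ l := List.head_mem hne
  have hbl : b ∈ l := List.getLast_mem hne
  by_cases h1 : ∃ x, x ∉ l ∧ G.Adj x a
  · obtain ⟨x, hx, hadj⟩ := h1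
    exact ⟨x :: l, List.nodup_cons.mpr ⟨hx, hnd⟩,
      List.isChain_cons.mpr ⟨by rw [List.head?_eq_head hne]; rintro _ ⟨rfl⟩; exact hadj, hc⟩,
      by simp [hm]⟩
  by_cases h2 : ∃ x, x ∉ l ∧ G.Adj b x
  · obtain ⟨x, hx, hadj⟩ := h2
    refine ⟨l ++ [x], ?_, ?_, by simp [hm]⟩
    · simp [List.nodup_append, hnd, hx]; exact fun y hy e => hx (e ▸ hy)
    · refine List.isChain_append.mpr ⟨hc, List.isChain_singleton x, ?_⟩
      rw [List.getLast?_eq_getLast hne]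
      rintro _ ⟨rfl⟩ _ ⟨rfl⟩
      exact hadj
  push_neg at h1 h2
  -- all neighbours of a and b lie in l
  have hNa : ∀ x, G.Adj a x → x ∈ l := fun x hx => by
    by_contra hxl; exact h1 x hxl hx.symm
  have hNb : ∀ x, G.Adj b x → x ∈ l := fun x hx => by
    by_contra hxl; exact h2 x hxl hx
  -- a vertex outside l
  have hcardl : l.toFinset.card = m := by rw [List.toFinset_card_of_nodup hnd]
  obtain ⟨u, hu⟩ : ∃ u, u ∉ l := by
    by_contra h
    push_neg at h
    have : l.toFinset = univ := eq_univ_iff_forall.mpr (fun v => List.mem_toFinset.mpr (h v))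
    rw [this, card_univ] at hcardl
    omega
  -- m ≥ 2
  have hm2 : 2 ≤ m := by
    rcases Nat.lt_or_ge m 2 with h | h
    · exfalso
      have hml : m = 1 := by omega
      have hdega := hdeg a
      have : 0 < G.degree a := by omega
      obtain ⟨x, hx⟩ := card_pos.mp (by rwa [card_neighborFinset_eq_degree] : 
        0 < (G.neighborFinset a).card)
      rw [mem_neighborFinset] at hx
      have := hNa x hx
      -- l has length 1 so l = [a]; x ∈ l means x = a, contradiction
      have hla : l = [a] := by
        cases l with
        | nil => simp at hne
        | cons y t =>
          cases t with
          | nil => simp [ha]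
          | cons z t' => simp [hm] at hml
      rw [hla] at this
      simp at this
      exact G.irrefl (this ▸ hx)
    · exact h
  -- pigeonhole sets
  set A : Finset ℕ := (range (m-1)).filter (fun i => G.Adj a (l.getD (i+1) a)) with hA
  set B : Finset ℕ := (range (m-1)).filter (fun i => G.Adj b (l.getD i a)) with hB
  have hl0 : l[0]'(by omega) = a := List.getElem_zero _
  have hlast : l[m-1]'(by omega) = b := (List.getLast_eq_getElem hne).symm
  have hdegA : G.degree a ≤ A.card := by
    rw [← card_neighborFinset_eq_degree]
    apply card_le_card_of_injOn (fun x => l.idxOf x - 1)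
    · intro x hx
      rw [mem_coe, mem_neighborFinset] at hx
      have hxl : x ∈ l := hNa x hx
      have hj : l.idxOf x < m := List.idxOf_lt_length_iff.mpr hxl
      have hgj : l[l.idxOf x]'hj = x := List.getElem_idxOf hj
      have hj0 : l.idxOf x ≠ 0 := by
        intro h
        simp only [h] at hgj
        exact G.ne_of_adj hx (hl0 ▸ hgj)
      simp only [hA, mem_coe, mem_filter, mem_range]
      refine ⟨by omega, ?_⟩
      have e : l.idxOf x - 1 + 1 = l.idxOf x := by omega
      have hgd : l.getD (l.idxOf x - 1 + 1) a = x := by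
        rw [e, List.getD_eq_getElem l a hj]; exact hgj
      rw [hgd]
      exact hx
    · intro x hx y hy hxy
      rw [mem_coe, mem_neighborFinset] at hx hy
      have hjx : l.idxOf x < m := List.idxOf_lt_length_iff.mpr (hNa x hx)
      have hjy : l.idxOf y < m := List.idxOf_lt_length_iff.mpr (hNa y hy)
      have hjx0 : l.idxOf x ≠ 0 := by
        intro h
        have := List.getElem_idxOf hjx
        simp only [h] at this
        exact G.ne_of_adj hx (hl0 ▸ this)
      have hjy0 : l.idxOf y ≠ 0 := by
        intro h
        have := List.getElem_idxOf hjy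
        simp only [h] at this
        exact G.ne_of_adj hy (hl0 ▸ this)
      have hxy' : l.idxOf x - 1 = l.idxOf y - 1 := hxy
      have heq : l.idxOf x = l.idxOf y := by omega
      exact (List.idxOf_inj (hNa x hx)).mp heq
  have hdegB : G.degree b ≤ B.card := by
    rw [← card_neighborFinset_eq_degree]
    apply card_le_card_of_injOn (fun x => l.idxOf x)
    · intro x hx
      rw [mem_coe, mem_neighborFinset] at hx
      have hxl : x ∈ l := hNb x hx
      have hj : l.idxOf x < m := List.idxOf_lt_length_iff.mpr hxl
      have hgj : l[l.idxOf x]'hj = x := List.getElem_idxOf hj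
      have hjm : l.idxOf x ≠ m - 1 := by
        intro h
        simp only [h] at hgj
        exact G.ne_of_adj hx (hlast ▸ hgj)
      simp only [hB, mem_coe, mem_filter, mem_range]
      exact ⟨by omega, by rw [List.getD_eq_getElem l a hj, hgj]; exact hx⟩
    · intro x hx y hy hxy
      rw [mem_coe, mem_neighborFinset] at hx hy
      exact (List.idxOf_inj (hNb x hx)).mp hxy
  -- intersection nonempty
  have hABsub : A ∪ B ⊆ range (m-1) := by
    apply union_subset <;> exact filter_subset _ _
  have hABcard : (A ∪ B).card ≤ m - 1 := le_trans (card_le_card hABsub) (by simp)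
  have hsum := card_union_add_card_inter A B
  have hda := hdeg a; have hdb := hdeg b
  have hint : 0 < (A ∩ B).card := by omega
  obtain ⟨i, hi⟩ := card_pos.mp hint
  rw [mem_inter] at hi
  obtain ⟨hiA, hiB⟩ := hi
  rw [hA, mem_filter, mem_range] at hiA
  rw [hB, mem_filter, mem_range] at hiB
  obtain ⟨him, hiadjA⟩ := hiA
  obtain ⟨_, hiadjB⟩ := hiB
  have hi1m : i + 1 < m := by omega
  rw [List.getD_eq_getElem l a hi1m] at hiadjA
  rw [List.getD_eq_getElem l a (by omega : i < m)] at hiadjB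
  -- the cycle list
  set c : List V := l.take (i+1) ++ (l.drop (i+1)).reverse with hcdef
  have hperm : c.Perm l := by
    have h3 : (l.take (i+1) ++ (l.drop (i+1)).reverse).Perm (l.take (i+1) ++ l.drop (i+1)) :=
      List.Perm.append_left _ (List.reverse_perm _)
    rw [List.take_append_drop] at h3
    exact h3
  have hndc : c.Nodup := hperm.nodup_iff.mpr hnd
  have hlenc : c.length = m := hperm.length_eq
  have htklen : (l.take (i+1)).length = i + 1 := by
    rw [List.length_take]; omega
  have hdrne : l.drop (i+1) ≠ [] := by
    apply List.ne_nil_of_length_pos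
    rw [List.length_drop]; omega
  have hclast? : c.getLast? = some (l[i+1]'hi1m) := by
    rw [hcdef, List.getLast?_append_of_ne_nil _ (by simpa using hdrne),
      List.getLast?_reverse, List.head?_drop]
    exact List.getElem?_eq_getElem hi1m
  have hchead? : c.head? = some a := by
    rw [List.head?_eq_getElem?, hcdef, List.getElem?_append, htklen,
      if_pos (Nat.succ_pos i), List.getElem?_take, if_pos (Nat.succ_pos i),
      List.getElem?_eq_getElem (by omega : 0 < m), hl0]
  have hcchain : c.Chain' G.Adj := by
    refine List.isChain_append.mpr ⟨hc.prefix (List.take_prefix _ _), ?_, ?_⟩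
    · rw [List.isChain_reverse]
      exact (hc.suffix (List.drop_suffix _ _)).imp (fun x y h => h.symm)
    · intro p hp q hq
      have h1' : (l.take (i+1)).getLast? = some (l[i]'(by omega : i < m)) := by
        conv_lhs => rw [List.take_succ]
        rw [List.getElem?_eq_getElem (by omega : i < m)]
        rw [List.getLast?_append_of_ne_nil _ (by simp)]
        simp
      have h2' : ((l.drop (i+1)).reverse).head? = some b := by
        rw [List.head?_reverse, List.getLast?_eq_getElem?, List.length_drop,
          List.getElem?_drop]
        have e : i + 1 + (m - (i+1) - 1) = m - 1 := by omega
        rw [e, List.getElem?_eq_getElem (by omega : m - 1 < m), hlast]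
      rw [h1'] at hp
      rw [h2'] at hq
      simp only [Option.mem_some_iff] at hp hq
      subst hp; subst hq
      exact hiadjB.symm
  have hclosed : G.Adj (l[i+1]'hi1m) a := hiadjA.symm
  -- vertex outside adjacent to something on the cycle
  obtain ⟨w, hwl, huw⟩ : ∃ w ∈ l, G.Adj u w := by
    by_contra hcon
    push_neg at hcon
    have hunea : u ≠ a := fun h => hu (h ▸ hal)
    obtain ⟨y, hy1, hy2⟩ := common_nbr G hdeg hunea (hcon a hal)
    exact hcon y (hNa y hy2) hy1
  have hwc : w ∈ c := hperm.mem_iff.mpr hwl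
  obtain ⟨x, y, hxy⟩ := List.append_of_mem hwc
  set c' : List V := w :: (y ++ x) with hc'def
  have hpc' : c'.Perm c := by
    rw [hxy]
    have e : c' = (w :: y) ++ x := by simp [hc'def]
    rw [e]
    exact List.perm_append_comm
  have hchainc' : c'.Chain' G.Adj := by
    show ((w :: y) ++ x).Chain' G.Adj
    refine List.isChain_append.mpr ⟨hcchain.suffix ⟨x, hxy.symm⟩,
      hcchain.prefix ⟨w :: y, hxy.symm⟩, ?_⟩
    intro p hp q hq
    cases x with
    | nil => simp at hq
    | cons x0 x' =>
      have hq0 : x0 = q := by simpa using hq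
      have hx0 : x0 = a := by
        have h5 := hchead?
        rw [hxy] at h5
        simpa using h5
      have hp0 : some p = c.getLast? := by
        rw [hxy, List.getLast?_append_of_ne_nil _ (by simp : (w : V) :: y ≠ [])]
        simpa using hp.symm
      rw [hclast?] at hp0
      simp only [Option.some_inj] at hp0
      subst hq0
      rw [hp0, hx0]
      exact hclosed
  have huc' : u ∉ c' := fun h => hu (hperm.mem_iff.mp (hpc'.mem_iff.mp h))
  refine ⟨u :: c', List.nodup_cons.mpr ⟨huc', hpc'.nodup_iff.mpr hndc⟩, ?_, ?_⟩
  · refine List.isChain_cons.mpr ⟨?_, hchainc'⟩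
    intro z hz
    simp only [hc'def, List.head?_cons, Option.mem_some_iff] at hz
    subst hz
    exact huw
  · have : c'.length = m := hpc'.length_eq.trans hlenc
    simp [this]


theorem dirac_traceable (G : SimpleGraph V) [DecidableRel G.Adj]
    (hn : 3 ≤ Fintype.card V)
    (hδ : ((Fintype.card V : ℝ) - 1) / 2 ≤ (G.minDegree : ℝ)) :
    G.IsTraceable := by
  classical
  have hdeg : ∀ v, Fintype.card V ≤ 2 * G.degree v + 1 := by
    intro v
    have h1 : (G.minDegree : ℝ) ≤ (G.degree v : ℝ) := by
      exact_mod_cast G.minDegree_le_degree v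
    have h2 : (Fintype.card V : ℝ) ≤ 2 * (G.degree v : ℝ) + 1 := by linarith
    exact_mod_cast h2
  have hV : Nonempty V := Fintype.card_pos_iff.mp (by omega)
  obtain ⟨v0⟩ := hV
  have key : ∀ k, k ≤ Fintype.card V → 1 ≤ k →
      ∃ l : List V, l.Nodup ∧ l.Chain' G.Adj ∧ l.length = k := by
    intro k
    induction k with
    | zero => omega
    | succ k ih =>
      intro hk _
      rcases Nat.eq_zero_or_pos k with rfl | hk1
      · exact ⟨[v0], by simp, List.isChain_singleton v0, rfl⟩
      · obtain ⟨l, h1, h2, h3⟩ := ih (by omega) hk1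
        have hne : l ≠ [] := List.ne_nil_of_length_pos (by omega)
        obtain ⟨l', a1, a2, a3⟩ := extend_chain G hdeg l h1 h2 hne (by omega)
        exact ⟨l', a1, a2, by omega⟩
  obtain ⟨l, hnd, hch, hlen⟩ := key (Fintype.card V) le_rfl (by omega)
  have hne : l ≠ [] := List.ne_nil_of_length_pos (by omega)
  obtain ⟨u, v, p, hp⟩ := walk_of_chain G l hch hne
  refine ⟨u, v, p, ?_⟩
  intro a
  rw [hp]
  apply List.count_eq_one_of_mem hnd
  have huniv : l.toFinset = Finset.univ := by
    apply Finset.eq_univ_of_card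
    rw [List.toFinset_card_of_nodup hnd, hlen]
  exact List.mem_toFinset.mp (huniv ▸ Finset.mem_univ a)
end

section
/- If G is a k-connected graph on n ≥ 3 vertices and the independence number α(G) ≤ k - 1, then G is Hamiltonian-connected. -/
open SimpleGraph Finset Matrix

variable {V : Type*} [Fintype V] [DecidableEq V]

section CEaux
open List

omit [Fintype V] [DecidableEq V] in
lemma walk_support_head? {G : SimpleGraph V} {u v : V} (p : G.Walk u v) :
    p.support.head? = some u := by cases p <;> simp

omit [Fintype V] [DecidableEq V] in
lemma walk_support_getLast? {G : SimpleGraph V} {u v : V} (p : G.Walk u v) :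
    p.support.getLast? = some v := by
  rw [List.getLast?_eq_getLast p.support_ne_nil, p.getLast_support]

omit [Fintype V] [DecidableEq V] in
lemma exists_walk_of_chain' (G : SimpleGraph V) :
    ∀ (L : List V) (u v : V), L.IsChain G.Adj → L.head? = some u → L.getLast? = some v →
      ∃ p : G.Walk u v, p.support = L := by
  intro L
  induction L with
  | nil => intro u v _ h; simp at h
  | cons a t ih =>
    intro u v hc hh hl
    simp only [head?_cons, Option.some.injEq] at hh
    subst hh
    match t, hc, hl with
    | [], _, hl =>
      simp only [getLast?_singleton, Option.some.injEq] at hl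
      subst hl
      exact ⟨Walk.nil, rfl⟩
    | b :: t', hc, hl =>
      rw [List.isChain_cons_cons] at hc
      obtain ⟨hab, hc'⟩ := hc
      rw [List.getLast?_cons_cons] at hl
      obtain ⟨p, hp⟩ := ih b v hc' rfl hl
      exact ⟨Walk.cons hab p, by simp [Walk.support_cons, hp]⟩

omit [Fintype V] in

lemma extend_contra (G : SimpleGraph V) {u v : V} {L M : List V} {i j : ℕ} {ha hb : V}
    (hc : L.IsChain G.Adj) (hn : L.Nodup) (hh : L.head? = some u) (hl : L.getLast? = some v)
    (hmax : ∀ L' : List V, L'.IsChain G.Adj → L'.Nodup → L'.head? = some u →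
      L'.getLast? = some v → L'.length ≤ L.length)
    (hij : i < j) (hjm : j < L.length)
    (hMne : M ≠ []) (hMc : M.IsChain G.Adj) (hMn : M.Nodup) (hMd : ∀ x ∈ M, x ∉ L)
    (hMh : M.head? = some ha) (hMl : M.getLast? = some hb)
    (hadjA : G.Adj (L.getD i u) ha) (hadjB : G.Adj (L.getD j u) hb)
    (hcase : j = i + 1 ∨ (j + 1 < L.length ∧ G.Adj (L.getD (i+1) u) (L.getD (j+1) u))) :
    False := by
  classical
  set m := L.length with hm
  have him : i < m := lt_trans hij hjm
  have hi1m : i + 1 < m := lt_of_le_of_lt hij hjm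
  -- getElem? facts
  have hgetD : ∀ n, n < m → L[n]? = some (L.getD n u) := by
    intro n hnm
    rw [List.getElem?_eq_getElem hnm, List.getD_eq_getElem _ _ hnm]
  set T := L.take (i+1) with hT
  set Seg := (L.drop (i+1)).take (j-i) with hSeg
  set D := L.drop (j+1) with hD
  set L' := T ++ (M ++ (Seg.reverse ++ D)) with hL'
  -- decomposition of L
  have hdropdrop : (L.drop (i+1)).drop (j-i) = D := by
    rw [List.drop_drop]
    congr 1
    omega
  have hSegD : Seg ++ D = L.drop (i+1) := by
    rw [← hdropdrop, hSeg, List.take_append_drop]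
  have hTSD : T ++ (Seg ++ D) = L := by
    rw [hSegD, hT, List.take_append_drop]
  -- permutation
  have hperm : L'.Perm (M ++ L) := by
    calc L' = T ++ (M ++ (Seg.reverse ++ D)) := rfl
    _ ~ T ++ (M ++ (Seg ++ D)) := by
        exact List.Perm.append_left _ (List.Perm.append_left _
          (List.Perm.append_right _ (List.reverse_perm _)))
    _ ~ M ++ (T ++ (Seg ++ D)) := List.perm_append_comm_assoc _ _ _
    _ = M ++ L := by rw [hTSD]
  have hdisj : M.Disjoint L := hMd
  have hnodup' : L'.Nodup := hperm.nodup_iff.mpr (List.nodup_append'.mpr ⟨hMn, hn, hdisj⟩)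
  have hlen' : L'.length = M.length + m := by rw [hperm.length_eq, List.length_append]
  -- head
  have hhead' : L'.head? = some u := by
    obtain ⟨a, t, rfl⟩ : ∃ a t, L = a :: t := by
      cases L with
      | nil => simp at hh
      | cons a t => exact ⟨a, t, rfl⟩
    simp only [head?_cons, Option.some.injEq] at hh
    subst hh
    simp [hL', hT, List.take_succ_cons]
  -- lengths and getElem? of pieces
  have hTlen : T.length = i + 1 := by rw [hT, List.length_take]; omega
  have hSeglen : Seg.length = j - i := by
    rw [hSeg, List.length_take, List.length_drop]; omega
  have hTlast : T.getLast? = some (L.getD i u) := by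
    rw [List.getLast?_eq_getElem?, hTlen, Nat.add_sub_cancel, hT, List.getElem?_take,
      if_pos (Nat.lt_succ_self i), hgetD i him]
  have hSeghead : Seg.head? = some (L.getD (i+1) u) := by
    rw [List.head?_eq_getElem?, hSeg, List.getElem?_take, if_pos (by omega), List.getElem?_drop,
      Nat.add_zero, hgetD _ hi1m]
  have hSeglast : Seg.getLast? = some (L.getD j u) := by
    rw [List.getLast?_eq_getElem?, hSeglen, hSeg, List.getElem?_take, if_pos (by omega),
      List.getElem?_drop]
    have : i + 1 + (j - i - 1) = j := by omega
    rw [this, hgetD _ hjm]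
  have hSegne : Seg ≠ [] := by
    intro h
    rw [h] at hSeglen
    simp at hSeglen; omega
  have hDhead : ∀ y, D.head? = some y → y = L.getD (j+1) u ∧ j + 1 < m := by
    intro y hy
    have hDne : D ≠ [] := by intro h; rw [h] at hy; simp at hy
    have hj1m : j + 1 < m := by
      by_contra h
      have : D = [] := by rw [hD]; apply List.drop_eq_nil_of_le; omega
      exact hDne this
    rw [List.head?_eq_getElem?, hD, List.getElem?_drop, Nat.add_zero, hgetD _ hj1m] at hy
    exact ⟨by simpa using hy.symm, hj1m⟩
  -- last
  have hlast' : L'.getLast? = some v := by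
    by_cases hDne : D = []
    · -- then j+1 ≥ m, so j = m - 1, and L.getD j u = v
      have hj1 : m ≤ j + 1 := by
        have := congrArg List.length hDne
        rw [hD, List.length_drop] at this
        simp at this
        omega
      have hjv : L.getD j u = v := by
        have h2 := hl
        rw [List.getLast?_eq_getElem?, ← hm] at h2
        have hj : j = m - 1 := by omega
        rw [hgetD _ (by omega)] at h2
        rw [hj]
        exact Option.some_inj.mp h2
      rw [hL', hDne, List.append_nil]
      rw [List.getLast?_append_of_ne_nil _ (by simp [hSegne]),
        List.getLast?_append_of_ne_nil _ (by simp [hSegne]),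
        List.getLast?_reverse, hSeghead]
      -- getLast? of Seg.reverse is Seg.head? ; need L.getD (i+1) u = v
      -- since D = [], from hcase we must have j = i+1
      rcases hcase with hji | ⟨hjm2, _⟩
      · rw [← hji, hjv]
      · omega
    · rw [hL', List.getLast?_append_of_ne_nil _ (by simp [hDne]),
        List.getLast?_append_of_ne_nil _ (by simp [hDne]),
        List.getLast?_append_of_ne_nil _ hDne]
      have : L.getLast? = D.getLast? := by
        conv_lhs => rw [← hTSD]
        rw [List.getLast?_append_of_ne_nil _ (by simp [hDne]),
          List.getLast?_append_of_ne_nil _ hDne]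
      rw [← this, hl]
  -- chain edges of L
  have hchainL : ∀ n, n + 1 < m → G.Adj (L.getD n u) (L.getD (n+1) u) := by
    intro n hn
    have := List.isChain_iff_getElem.mp hc n (by omega)
    rwa [List.getD_eq_getElem _ _ (by omega), List.getD_eq_getElem _ _ (by omega)]
  -- chain'
  have hflip : flip G.Adj = G.Adj := by
    ext a b; exact ⟨fun h => h.symm, fun h => h.symm⟩
  have hchain' : L'.IsChain G.Adj := by
    rw [hL', List.isChain_append]
    refine ⟨hc.take _, ?_, ?_⟩
    · rw [List.isChain_append]
      refine ⟨hMc, ?_, ?_⟩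
      · rw [List.isChain_append]
        refine ⟨?_, hc.drop _, ?_⟩
        · rw [List.isChain_reverse, show (fun a b => G.Adj b a) = G.Adj by ext a b; exact G.adj_comm b a]
          exact (hc.drop _).take _
        · intro x hx y hy
          rw [List.getLast?_reverse, hSeghead] at hx
          obtain ⟨rfl, hj1m⟩ := hDhead y hy
          simp only [Option.mem_def, Option.some.injEq] at hx
          subst hx
          rcases hcase with hji | ⟨_, hadj⟩
          · rw [hji]; exact hchainL _ (by omega)
          · exact hadj
      · intro x hx y hy
        rw [hMl] at hx
        rw [List.head?_append_of_ne_nil _ (by simp [List.reverse_eq_nil_iff, hSegne] : Seg.reverse ≠ []),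
          List.head?_reverse, hSeglast] at hy
        simp only [Option.mem_def, Option.some.injEq] at hx hy
        subst hx; subst hy
        exact hadjB.symm
    · intro x hx y hy
      rw [hTlast] at hx
      rw [List.head?_append_of_ne_nil _ hMne, hMh] at hy
      simp only [Option.mem_def, Option.some.injEq] at hx hy
      subst hx; subst hy
      exact hadjA
  have := hmax L' hchain' hnodup' hhead' hlast'
  have hM0 : 0 < M.length := List.length_pos_iff.mpr hMne
  omega


end CEaux

open List in
theorem chvatal_erdos_hamiltonian_connected (G : SimpleGraph V) (k : ℕ)
    (hn : 3 ≤ Fintype.card V) (hk : G.IsKConnected k)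
    (hα : ∀ s : Finset V, G.IsIndependentSet s → s.card ≤ k - 1) :
    G.IsHamiltonianConnected := by
  classical
  obtain ⟨x0⟩ : Nonempty V := Fintype.card_pos_iff.mp (by omega)
  have hk2 : 2 ≤ k := by
    have h1 := hα {x0} (by
      intro a ha b hb
      simp only [Finset.mem_singleton] at ha hb
      subst ha; subst hb
      exact fun h => G.loopless.irrefl _ h)
    simp only [Finset.card_singleton] at h1
    omega
  have hconn : G.Connected := by
    have h := hk.2 ∅ (by simpa using (by omega : 0 < k))
    have he : ((↑(∅ : Finset V) : Set V)ᶜ) = Set.univ := by simp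
    rw [he] at h
    exact (SimpleGraph.induceUnivIso G).connected_iff.mp h
  intro u v huv
  obtain ⟨q0⟩ := hconn.preconnected u v
  set Q : ℕ → Prop := fun n => ∃ L : List V,
    (L.IsChain G.Adj ∧ L.Nodup ∧ L.head? = some u ∧ L.getLast? = some v) ∧ L.length = n with hQdef
  have hQ0 : Q q0.bypass.support.length :=
    ⟨q0.bypass.support, ⟨q0.bypass.isChain_adj_support, q0.bypass_isPath.support_nodup,
      walk_support_head? _, walk_support_getLast? _⟩, rfl⟩
  have hbound : q0.bypass.support.length ≤ Fintype.card V :=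
    q0.bypass_isPath.support_nodup.length_le_card
  obtain ⟨L, ⟨hc, hnd, hh, hl⟩, hLN⟩ := Nat.findGreatest_spec hbound hQ0
  have hmax : ∀ L' : List V, L'.IsChain G.Adj → L'.Nodup → L'.head? = some u →
      L'.getLast? = some v → L'.length ≤ L.length := by
    intro L' h1 h2 h3 h4
    rw [hLN]
    exact Nat.le_findGreatest h2.length_le_card ⟨L', ⟨h1, h2, h3, h4⟩, rfl⟩
  have hLne : L ≠ [] := by intro h; rw [h] at hh; simp at hh
  have hlen2 : 2 ≤ L.length := by
    match L, hh, hl with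
    | [], hh, _ => simp at hh
    | [a], hh, hl =>
      simp only [head?_cons, Option.some.injEq] at hh
      simp only [getLast?_singleton, Option.some.injEq] at hl
      exact absurd (hh.symm.trans hl) huv
    | a :: b :: t, _, _ => simp
  by_cases hall : ∀ x : V, x ∈ L
  · obtain ⟨p, hp⟩ := exists_walk_of_chain' G L u v hc hh hl
    exact ⟨p, (Walk.IsPath.mk' (hp ▸ hnd)).isHamiltonian_of_mem (fun x => hp ▸ hall x)⟩
  push_neg at hall
  obtain ⟨w, hw⟩ := hall
  set Hs : Set V := {x | ∃ q : G.Walk w x, ∀ y ∈ q.support, y ∉ L} with hHs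
  have hwH : w ∈ Hs := ⟨Walk.nil, by simpa using hw⟩
  have hHL : ∀ x ∈ Hs, x ∉ L := by
    rintro x ⟨q, hq⟩
    exact hq x q.end_mem_support
  set A : Finset V := Finset.univ.filter (fun x => x ∈ L ∧ ∃ h ∈ Hs, G.Adj x h) with hA
  have hAmem : ∀ x, x ∈ A ↔ (x ∈ L ∧ ∃ h ∈ Hs, G.Adj x h) := by
    intro x; simp [hA]
  have hMex : ∀ h₁ ∈ Hs, ∀ h₂ ∈ Hs, ∃ M : List V, M ≠ [] ∧ M.IsChain G.Adj ∧ M.Nodup ∧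
      (∀ x ∈ M, x ∉ L) ∧ M.head? = some h₁ ∧ M.getLast? = some h₂ := by
    rintro h₁ ⟨q₁, hq₁⟩ h₂ ⟨q₂, hq₂⟩
    set r := (q₁.reverse.append q₂).bypass with hr
    refine ⟨r.support, r.support_ne_nil, r.isChain_adj_support,
      (q₁.reverse.append q₂).bypass_isPath.support_nodup, ?_,
      walk_support_head? _, walk_support_getLast? _⟩
    intro x hx
    have hx' := (q₁.reverse.append q₂).support_bypass_subset hx
    rw [Walk.mem_support_append_iff, Walk.support_reverse, List.mem_reverse] at hx'
    rcases hx' with h | h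
    · exact hq₁ x h
    · exact hq₂ x h
  have hconsec : ∀ i, i + 1 < L.length → L.getD i u ∈ A → L.getD (i+1) u ∈ A → False := by
    intro i hi h1 h2
    obtain ⟨_, h₁, hH1, hadj1⟩ := (hAmem _).mp h1
    obtain ⟨_, h₂, hH2, hadj2⟩ := (hAmem _).mp h2
    obtain ⟨M, hM1, hM2, hM3, hM4, hM5, hM6⟩ := hMex h₁ hH1 h₂ hH2
    exact extend_contra G hc hnd hh hl hmax (Nat.lt_succ_self i) hi hM1 hM2 hM3 hM4 hM5 hM6
      hadj1 hadj2 (Or.inl rfl)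
  by_cases hAk : A.card < k
  · have hind := hk.2 A hAk
    have hex : ∃ p₀, p₀ ∈ L ∧ p₀ ∉ A := by
      by_contra hno
      push_neg at hno
      refine hconsec 0 (by omega) (hno _ ?_) (hno _ ?_) <;>
        · rw [List.getD_eq_getElem _ _ (by omega)]; exact List.getElem_mem _
    obtain ⟨p₀, hp₀L, hp₀A⟩ := hex
    have hwA : w ∉ A := fun h => hw ((hAmem w).mp h).1
    have hwc : w ∈ (↑A : Set V)ᶜ := by simpa using hwA
    have hp₀c : p₀ ∈ (↑A : Set V)ᶜ := by simpa using hp₀A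
    obtain ⟨q⟩ := hind.preconnected ⟨w, hwc⟩ ⟨p₀, hp₀c⟩
    set q' := q.map (SimpleGraph.Embedding.induce ((↑A : Set V)ᶜ)).toHom with hq'
    have hq'A : ∀ y ∈ q'.support, y ∉ A := by
      intro y hy
      rw [hq', Walk.support_map] at hy
      obtain ⟨z, hz, rfl⟩ := List.mem_map.mp hy
      intro hmem
      exact z.2 (Finset.mem_coe.mpr hmem)
    have hclaim : ∀ x y (r : G.Walk x y), y ∈ Hs → (∀ z ∈ r.support, z ∉ A) → x ∈ Hs := by
      intro x y r
      induction r with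
      | nil => exact fun h _ => h
      | @cons a b c hadj p ih =>
        intro hcH hsup
        have hb : b ∈ Hs := ih hcH (fun z hz => hsup z (by
          rw [Walk.support_cons]; exact List.mem_cons_of_mem _ hz))
        by_cases haL : a ∈ L
        · exact absurd ((hAmem a).mpr ⟨haL, b, hb, hadj⟩) (hsup a (Walk.start_mem_support _))
        · obtain ⟨qb, hqb⟩ := hb
          refine ⟨qb.concat hadj.symm, ?_⟩
          intro z hz
          rw [Walk.support_concat, List.mem_append] at hz
          rcases hz with h | h
          · exact hqb z h
          · simp only [List.mem_singleton] at h; subst h; exact haL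
    have hp₀H : p₀ ∈ Hs := hclaim p₀ w q'.reverse hwH (by
      intro z hz
      exact hq'A z (List.mem_reverse.mp (by rw [← Walk.support_reverse]; exact hz)))
    exact absurd hp₀L (hHL _ hp₀H)
  · push_neg at hAk
    set m := L.length with hm
    set g : ℕ → V := fun i => L.getD i u with hg
    have hginj : ∀ i < m, ∀ j < m, g i = g j → i = j := by
      intro i hi j hj hij
      rw [hg] at hij
      simp only at hij
      rw [List.getD_eq_getElem _ _ hi, List.getD_eq_getElem _ _ hj] at hij
      have := List.nodup_iff_injective_getElem.mp hnd
        (a₁ := ⟨i, hi⟩) (a₂ := ⟨j, hj⟩) (by simpa using hij)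
      simpa using this
    set J := (Finset.range m).filter (fun i => g i ∈ A) with hJ
    have hAJ : A ⊆ J.image g := by
      intro a haA
      obtain ⟨iL, hiL, hieq⟩ := List.mem_iff_getElem.mp ((hAmem a).mp haA).1
      have hga : g iL = a := by
        rw [hg]; simp only; rw [List.getD_eq_getElem _ _ hiL]; exact hieq
      refine Finset.mem_image.mpr ⟨iL, ?_, hga⟩
      rw [hJ]
      refine Finset.mem_filter.mpr ⟨Finset.mem_range.mpr hiL, ?_⟩
      rw [hga]; exact haA
    have hJcard : A.card ≤ J.card := le_trans (Finset.card_le_card hAJ) Finset.card_image_le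
    set I := J.erase (m - 1) with hI
    have hIcard : J.card - 1 ≤ I.card := by
      by_cases hmem : (m - 1) ∈ J
      · rw [hI, Finset.card_erase_of_mem hmem]
      · rw [hI, Finset.erase_eq_of_notMem hmem]; omega
    have hImem : ∀ i ∈ I, i + 1 < m ∧ g i ∈ A := by
      intro i hi
      rw [hI, Finset.mem_erase, hJ, Finset.mem_filter, Finset.mem_range] at hi
      exact ⟨by omega, hi.2.2⟩
    set S := I.image (fun i => g (i + 1)) with hS
    have hScard : S.card = I.card := Finset.card_image_of_injOn (by
      intro a haI b hbI hab
      have ha' := hImem a haI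
      have hb' := hImem b hbI
      have := hginj (a+1) (by omega) (b+1) (by omega) hab
      omega)
    have hSL : ∀ x ∈ S, x ∈ L := by
      intro x hx
      obtain ⟨i, hi, rfl⟩ := Finset.mem_image.mp hx
      have h1 := (hImem i hi).1
      rw [hg]; simp only; rw [List.getD_eq_getElem _ _ h1]
      exact List.getElem_mem _
    have hwS : w ∉ S := fun h => hw (hSL w h)
    have hWnotadj : ∀ i ∈ I, ¬ G.Adj w (g (i+1)) := by
      intro i hi hadj
      have h1 := hImem i hi
      have hgL : g (i+1) ∈ L := by
        rw [hg]; simp only; rw [List.getD_eq_getElem _ _ h1.1]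
        exact List.getElem_mem _
      have hgA : g (i+1) ∈ A := (hAmem _).mpr ⟨hgL, w, hwH, hadj.symm⟩
      exact hconsec i h1.1 h1.2 hgA
    have hSSnotadj : ∀ i ∈ I, ∀ j ∈ I, i < j → ¬ G.Adj (g (i+1)) (g (j+1)) := by
      intro i hi j hj hij hadj
      obtain ⟨hi1, hiA⟩ := hImem i hi
      obtain ⟨hj1, hjA⟩ := hImem j hj
      obtain ⟨_, h₁, hH1, hadj1⟩ := (hAmem _).mp hiA
      obtain ⟨_, h₂, hH2, hadj2⟩ := (hAmem _).mp hjA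
      obtain ⟨M, hM1, hM2, hM3, hM4, hM5, hM6⟩ := hMex h₁ hH1 h₂ hH2
      exact extend_contra G hc hnd hh hl hmax hij (by omega) hM1 hM2 hM3 hM4 hM5 hM6
        hadj1 hadj2 (Or.inr ⟨by omega, hadj⟩)
    set s := insert w S with hs
    have hindep : G.IsIndependentSet s := by
      intro a haa b hbb
      rw [hs, Finset.mem_insert] at haa hbb
      rcases haa with rfl | haS
      · rcases hbb with rfl | hbS
        · exact fun h => G.loopless.irrefl _ h
        · obtain ⟨i, hi, rfl⟩ := Finset.mem_image.mp hbS
          exact hWnotadj i hi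
      · rcases hbb with rfl | hbS
        · obtain ⟨i, hi, rfl⟩ := Finset.mem_image.mp haS
          exact fun h => hWnotadj i hi h.symm
        · obtain ⟨i, hi, rfl⟩ := Finset.mem_image.mp haS
          obtain ⟨j, hj, rfl⟩ := Finset.mem_image.mp hbS
          rcases lt_trichotomy i j with h | h | h
          · exact hSSnotadj i hi j hj h
          · subst h; exact fun hadj => G.loopless.irrefl _ hadj
          · exact fun hadj => hSSnotadj j hj i hi h hadj.symm
    have hcard : s.card = S.card + 1 := Finset.card_insert_of_notMem hwS
    have hfin := hα s hindep
    omega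
end

section
/- If G is a k-connected graph on n ≥ 3 vertices and α(G) ≤ k, then G is Hamiltonian. -/
open SimpleGraph Finset Matrix

variable {V : Type*} [Fintype V] [DecidableEq V]

set_option linter.unusedSectionVars false
set_option linter.unusedVariables false
set_option maxHeartbeats 2000000
namespace CE
open List


def IsCyc (G : SimpleGraph V) (l : List V) : Prop :=
  3 ≤ l.length ∧ l.Nodup ∧ Cycle.Chain G.Adj (l : Cycle V)

lemma IsCyc.rotated {G : SimpleGraph V} {l l' : List V} (h : l ~r l') (hc : IsCyc G l) :
    IsCyc G l' := by
  obtain ⟨h1, h2, h3⟩ := hc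
  refine ⟨h.perm.length_eq ▸ h1, h.perm.nodup_iff.1 h2, ?_⟩
  rwa [← Cycle.coe_eq_coe.2 h]

lemma exists_rot {l : List V} {u : V} (h : u ∈ l) : ∃ t, l ~r (u :: t) := by
  obtain ⟨a, b, rfl⟩ := List.append_of_mem h
  exact ⟨b ++ a, by simpa using (List.isRotated_append (l := a) (l' := u :: b))⟩

lemma isCyc_cons_iff {G : SimpleGraph V} {u : V} {t : List V} :
    IsCyc G (u :: t) ↔ 3 ≤ (u :: t).length ∧ (u :: t).Nodup ∧
      List.Chain' G.Adj (u :: (t ++ [u])) := by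
  rw [IsCyc, Cycle.chain_coe_cons]
  exact Iff.rfl

def ofChain (G : SimpleGraph V) : ∀ (u : V) (l : List V), List.Chain G.Adj u l →
    G.Walk u ((u :: l).getLast (List.cons_ne_nil u l))
  | _, [], _ => Walk.nil
  | u, v :: l, h =>
    (Walk.cons (List.chain_cons.1 h).1 (ofChain G v l (List.chain_cons.1 h).2)).copy rfl
      (List.getLast_cons (List.cons_ne_nil v l)).symm

lemma ofChain_support (G : SimpleGraph V) : ∀ (u : V) (l : List V) (h : List.Chain G.Adj u l),
    (ofChain G u l h).support = u :: l
  | _, [], _ => rfl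
  | u, v :: l, h => by
    rw [ofChain, Walk.support_copy, Walk.support_cons]
    exact congrArg _ (ofChain_support G v l _)

lemma edge_start {G : SimpleGraph V} : ∀ {v w : V} (p : G.Walk v w), p.support.Nodup →
    ∀ {x}, s(v, x) ∈ p.edges → p.support.tail.head? = some x := by
  intro v w p
  induction p with
  | nil => simp
  | @cons v u' w h q ih =>
    intro hn x hx
    rw [Walk.edges_cons, List.mem_cons] at hx
    rcases hx with hx | hx
    · have hx' : x = u' := by
        simp only [Sym2.eq, Sym2.rel_iff', Prod.mk.injEq, Prod.swap_prod_mk] at hx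
        rcases hx with ⟨-, h2⟩ | ⟨h1, -⟩
        · exact h2
        · exact absurd h1 h.ne
      subst hx'
      rw [Walk.support_cons, List.tail_cons, q.support_eq_cons, List.head?_cons]
    · exact absurd (q.fst_mem_support_of_mem_edges hx)
        (by simpa [Walk.support_cons] using List.Nodup.notMem (l := q.support) hn)

lemma hamCycle_of_isCyc {G : SimpleGraph V} {l : List V} (hc : IsCyc G l)
    (hall : ∀ v : V, v ∈ l) : G.IsHamiltonian := by
  intro _
  obtain ⟨hlen, hnd, hch⟩ := hc
  match l, hlen, hnd, hch, hall with
  | u :: b :: t, hlen, hnd, hch, hall =>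
  rw [Cycle.chain_coe_cons, List.cons_append, List.chain_cons] at hch
  obtain ⟨hub, hch⟩ := hch
  have hlast : ((b :: (t ++ [u])).getLast (List.cons_ne_nil _ _)) = u := by
    simp [List.getLast_cons, List.getLast_append]
  refine ⟨u, Walk.cons hub ((ofChain G b (t ++ [u]) hch).copy rfl hlast), ?_⟩
  have hsupp : ((ofChain G b (t ++ [u]) hch).copy rfl hlast).support = b :: (t ++ [u]) := by
    rw [Walk.support_copy]; exact ofChain_support G b (t ++ [u]) hch
  have hnd2 : (b :: (t ++ [u])).Nodup := by
    simp only [List.nodup_cons, List.mem_cons, List.mem_append, List.mem_singleton,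
      List.nodup_append, List.nodup_singleton, List.disjoint_singleton, not_or] at hnd ⊢
    aesop
  constructor
  · rw [Walk.cons_isCycle_iff]
    constructor
    · rw [Walk.isPath_def, hsupp]; exact hnd2
    · intro hmem
      have := edge_start _ (by rw [hsupp]; exact hnd2) (by rwa [Sym2.eq_swap])
      rw [hsupp] at this
      match t with
      | c :: t' =>
        simp at this
        simp [this] at hnd
  · rw [Walk.tail_cons]
    intro a
    refine (congrArg (List.count a) ((Walk.support_copy _ _ _).trans ((Walk.support_copy _ _ _).trans
      (ofChain_support G b _ hch)))).trans ?_
    refine List.count_eq_one_of_mem hnd2 ?_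
    have := hall a
    simp at this ⊢
    tauto



def nxt (l : List V) (u : V) : V := if h : u ∈ l then l.next u h else u

lemma nxt_mem {l : List V} {u : V} (h : u ∈ l) : nxt l u ∈ l := by
  rw [nxt, dif_pos h]; exact List.next_mem l u h

lemma nxt_rot {l l' : List V} (h : l ~r l') (hn : l.Nodup) {u : V} (hu : u ∈ l) :
    nxt l u = nxt l' u := by
  rw [nxt, nxt, dif_pos hu, dif_pos (h.mem_iff.1 hu)]
  exact List.isRotated_next_eq h hn hu

lemma nxt_inj {l : List V} (hn : l.Nodup) {u v : V} (hu : u ∈ l) (hv : v ∈ l)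
    (h : nxt l u = nxt l v) : u = v := by
  rw [nxt, dif_pos hu, nxt, dif_pos hv] at h
  have h1 := List.prev_next l hn u hu
  have h2 := List.prev_next l hn v hv
  rw [← h1, ← h2]
  congr 1

lemma nxt_cons_cons {u z : V} {t : List V} : nxt (u :: z :: t) u = z := by
  rw [nxt, dif_pos List.mem_cons_self]
  exact List.next_cons_cons_eq t u z _

lemma adj_nxt {G : SimpleGraph V} {l : List V} (hc : IsCyc G l) {u : V} (hu : u ∈ l) :
    G.Adj u (nxt l u) := by
  obtain ⟨t, hr⟩ := exists_rot hu
  have hc' := hc.rotated hr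
  have ht : t ≠ [] := by rintro rfl; simpa using hc'.1
  match t, ht with
  | z :: t', _ =>
    rw [nxt_rot hr hc.2.1 hu, nxt_cons_cons]
    have hch := (isCyc_cons_iff.1 hc').2.2
    unfold List.Chain' at hch
    rw [List.cons_append, List.isChain_cons_cons] at hch
    exact hch.1

lemma nxt_middle {l : List V} (hn : l.Nodup) {A B : List V} {u v : V}
    (hl : l ~r (A ++ u :: v :: B)) : nxt l u = v := by
  have hn' : (A ++ u :: v :: B).Nodup := hl.perm.nodup_iff.1 hn
  have hu : u ∈ l := hl.mem_iff.2 (by simp)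
  rw [nxt_rot hl hn hu]
  have hr2 : (A ++ u :: v :: B) ~r (u :: v :: (B ++ A)) := by
    simpa using (List.isRotated_append (l := A) (l' := u :: v :: B))
  rw [nxt_rot hr2 hn' (by simp), nxt_cons_cons]

lemma nxt_getLast {l : List V} (hn : l.Nodup) {A : List V} {u w : V}
    (hl : l ~r (u :: (A ++ [w]))) : nxt l w = u := by
  have hn' : (u :: (A ++ [w])).Nodup := hl.perm.nodup_iff.1 hn
  have hw : w ∈ l := hl.mem_iff.2 (by simp)
  rw [nxt_rot hl hn hw, nxt, dif_pos (by simp)]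
  have hwu : w ≠ u := by
    simp only [List.nodup_cons, List.mem_append, List.mem_singleton] at hn'
    exact fun h => hn'.1 (by simp [h])
  refine List.next_getLast_cons (A ++ [w]) w (by simp) u (by simp) hwu ?_ (by
    simpa using hn'.sublist (List.sublist_cons_self _ _))
  rw [List.getLast_cons (by simp : A ++ [w] ≠ [])]
  simp


def inducedHom (G : SimpleGraph V) (s : Set V) : G.induce s →g G :=
  ⟨Subtype.val, fun h => by simpa using h⟩

lemma exists_adj_of_reachable {W : Type*} {H : SimpleGraph W} {a b : W} (h : H.Reachable a b)
    (hne : a ≠ b) : ∃ c, H.Adj a c := by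
  obtain ⟨p⟩ := h
  cases p with
  | nil => exact absurd rfl hne
  | cons h q => exact ⟨_, h⟩

lemma exists_max_list {α : Type*} [Fintype α] (P : List α → Prop) (h0 : ∃ l, P l)
    (hb : ∀ l, P l → l.length ≤ Fintype.card α) :
    ∃ l, P l ∧ ∀ l', P l' → l'.length ≤ l.length := by
  classical
  obtain ⟨l0, hl0⟩ := h0
  obtain ⟨l, hl, hlen⟩ := Nat.findGreatest_spec (P := fun n => ∃ l, P l ∧ l.length = n)
    (hb l0 hl0) ⟨l0, hl0, rfl⟩
  exact ⟨l, hl, fun l' hl' => hlen ▸ Nat.le_findGreatest (hb l' hl') ⟨l', hl', rfl⟩⟩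

lemma k_pos {G : SimpleGraph V} {k : ℕ} (hn : 3 ≤ Fintype.card V)
    (hα : ∀ s : Finset V, G.IsIndependentSet s → s.card ≤ k) : 1 ≤ k := by
  have : Nonempty V := Fintype.card_pos_iff.1 (by omega)
  obtain ⟨v⟩ := this
  have := hα {v} (by
    intro a ha b hb
    rw [Finset.mem_singleton] at ha hb
    rw [ha, hb]
    exact G.loopless.irrefl v)
  simpa using this

lemma mindeg_two {G : SimpleGraph V} {k : ℕ} (hn : 3 ≤ Fintype.card V)
    (hk : G.IsKConnected k) (hα : ∀ s : Finset V, G.IsIndependentSet s → s.card ≤ k)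
    (v : V) : ∃ a b, a ≠ b ∧ G.Adj v a ∧ G.Adj v b := by
  have hk1 := k_pos hn hα
  rcases eq_or_lt_of_le hk1 with hk2 | hk2
  · -- k = 1 : G is complete
    have hcompl : ∀ u w : V, u ≠ w → G.Adj u w := by
      intro u w huw
      by_contra hadj
      have hind : G.IsIndependentSet {u, w} := by
        intro a ha b hb
        simp only [Finset.mem_insert, Finset.mem_singleton] at ha hb
        rcases ha with rfl | rfl <;> rcases hb with rfl | rfl
        · exact G.loopless.irrefl _
        · exact hadj
        · exact fun h => hadj h.symm
        · exact G.loopless.irrefl _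
      have := hα _ hind
      rw [Finset.card_insert_of_notMem (by simpa using huw), Finset.card_singleton] at this
      omega
    have h2 : 1 < (Finset.univ.erase v).card := by
      rw [Finset.card_erase_of_mem (Finset.mem_univ v), Finset.card_univ]
      omega
    obtain ⟨a, ha, b, hb, hab⟩ := Finset.one_lt_card.1 h2
    exact ⟨a, b, hab, hcompl v a (Finset.ne_of_mem_erase ha).symm,
      hcompl v b (Finset.ne_of_mem_erase hb).symm⟩
  · -- 2 ≤ k
    have hconn : G.Connected := by
      have h := hk.2 ∅ (by simpa using (by omega : 0 < k))
      rw [Finset.coe_empty, Set.compl_empty] at h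
      have hNe : Nonempty V := Fintype.card_pos_iff.1 (by omega)
      rw [SimpleGraph.connected_iff]
      refine ⟨fun u w => ?_, hNe⟩
      have := h.preconnected ⟨u, trivial⟩ ⟨w, trivial⟩
      exact this.map (inducedHom G _)
    obtain ⟨w0, hw0⟩ := Fintype.exists_ne_of_one_lt_card (by omega) v
    obtain ⟨a, hva⟩ := exists_adj_of_reachable (hconn.preconnected v w0) (Ne.symm hw0)
    by_contra hcon
    push_neg at hcon
    have huniq : ∀ b, G.Adj v b → b = a := by
      intro b hb
      by_contra hba
      exact hcon b a hba hb hva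
    have h := hk.2 {a} (by simpa using hk2)
    set S : Set V := ((↑({a} : Finset V) : Set V)ᶜ) with hS
    have hv' : v ∈ S := by simp [hS, hva.ne]
    have hwex : (((Finset.univ.erase v).erase a)).Nonempty := by
      rw [← Finset.card_pos]
      have h1 := Finset.card_erase_le (s := Finset.univ.erase v) (a := a)
      have h2 : (Finset.univ.erase v).card = Fintype.card V - 1 := by
        rw [Finset.card_erase_of_mem (Finset.mem_univ v), Finset.card_univ]
      have h3 := Finset.pred_card_le_card_erase (s := Finset.univ.erase v) (a := a)
      omega
    obtain ⟨w, hw⟩ := hwex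
    rw [Finset.mem_erase] at hw
    have hw2 := hw.2
    rw [Finset.mem_erase] at hw2
    have hw' : w ∈ S := by simp [hS, hw.1]
    have hne : (⟨v, hv'⟩ : S) ≠ (⟨w, hw'⟩ : S) := by
      intro hh
      exact hw2.1 (congrArg Subtype.val hh).symm
    obtain ⟨c, hc⟩ := exists_adj_of_reachable (h.preconnected ⟨v, hv'⟩ ⟨w, hw'⟩) hne
    have hadj : G.Adj v (c : V) := hc
    have hceq : (c : V) = a := huniq _ hadj
    have hca := c.2
    rw [hceq] at hca
    simp [hS] at hca

lemma exists_isCyc {G : SimpleGraph V} {k : ℕ} (hn : 3 ≤ Fintype.card V)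
    (hk : G.IsKConnected k) (hα : ∀ s : Finset V, G.IsIndependentSet s → s.card ≤ k) :
    ∃ l, IsCyc G l := by
  have : Nonempty V := Fintype.card_pos_iff.1 (by omega)
  obtain ⟨v0⟩ := this
  obtain ⟨p, ⟨hpne, hpnd, hpch⟩, hpmax⟩ := exists_max_list
    (fun l => l ≠ [] ∧ l.Nodup ∧ l.Chain' G.Adj)
    ⟨[v0], by simp [List.Chain']⟩ (fun l hl => hl.2.1.length_le_card)
  match p, hpne, hpnd, hpch, hpmax with
  | v :: rest, _, hpnd, hpch, hpmax =>
  have hmem : ∀ c, G.Adj v c → c ∈ v :: rest := by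
    intro c hc
    by_contra hcp
    have : (c :: v :: rest).length ≤ (v :: rest).length :=
      hpmax _ ⟨by simp, by simp [hpnd, hcp], List.isChain_cons_cons.2 ⟨hc.symm, hpch⟩⟩
    simp only [List.length_cons] at this
    omega
  obtain ⟨a, b, hab, hva, hvb⟩ := mindeg_two hn hk hα v
  have ha := hmem a hva
  have hb := hmem b hvb
  rw [List.mem_cons] at ha hb
  have ha' : a ∈ rest := ha.resolve_left (fun h => hva.ne (h.symm ▸ rfl))
  have hb' : b ∈ rest := hb.resolve_left (fun h => hvb.ne (h.symm ▸ rfl))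
  match rest, ha', hb' with
  | w :: rest', ha', hb' =>
  -- one of a, b is in rest'
  obtain ⟨c, hvc, hc⟩ : ∃ c, G.Adj v c ∧ c ∈ rest' := by
    rcases List.mem_cons.1 ha' with rfl | h
    · rcases List.mem_cons.1 hb' with rfl | h
      · exact absurd rfl hab
      · exact ⟨b, hvb, h⟩
    · exact ⟨a, hva, h⟩
  obtain ⟨D, E, rfl⟩ := List.append_of_mem hc
  refine ⟨v :: w :: (D ++ [c]), ?_⟩
  have hpref : (v :: w :: (D ++ [c])) <+: (v :: w :: (D ++ c :: E)) :=
    ⟨E, by simp⟩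
  rw [isCyc_cons_iff]
  refine ⟨by simp, hpnd.sublist hpref.sublist, ?_⟩
  have hL : List.Chain' G.Adj (v :: w :: (D ++ [c])) := hpch.prefix hpref
  have heq : (v :: ((w :: (D ++ [c])) ++ [v])) = (v :: w :: (D ++ [c])) ++ [v] := by simp
  rw [heq]
  refine List.IsChain.append hL (List.isChain_singleton v) ?_
  intro x hx y hy
  rw [List.head?_cons, Option.mem_def, Option.some_inj] at hy
  subst hy
  have hx' : x = c := by
    have heq2 : (v :: w :: (D ++ [c])) = (v :: w :: D) ++ [c] := by simp
    rw [heq2, List.getLast?_concat, Option.mem_def, Option.some_inj] at hx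
    exact hx.symm
  subst hx'
  exact hvc.symm


lemma step1_core {G : SimpleGraph V} {l : List V} (hl : IsCyc G l)
    (hlmax : ∀ l', IsCyc G l' → l'.length ≤ l.length)
    {u : V} (hu : u ∈ l) {P : List V} (hP : P ≠ []) (hPnd : P.Nodup)
    (hPch : P.Chain' G.Adj) (hPdisj : ∀ w ∈ P, w ∉ l)
    {yu yw : V} (hhead : P.head? = some yu) (hlast : P.getLast? = some yw)
    (hadju : G.Adj u yu) (hadjw : G.Adj yw (nxt l u)) : False := by
  obtain ⟨t, hr⟩ := exists_rot hu
  have hc' := hl.rotated hr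
  have ht : t ≠ [] := by rintro rfl; simpa using hc'.1
  match t, ht, hr, hc' with
  | z :: t', _, hr, hc' =>
  have hz : nxt l u = z := by rw [nxt_rot hr hl.2.1 hu, nxt_cons_cons]
  rw [hz] at hadjw
  have hLperm : (u :: (P ++ z :: t')) ~ P ++ (u :: z :: t') :=
    (List.perm_middle (a := u) (l₁ := P) (l₂ := z :: t')).symm
  have hnd' : (u :: z :: t').Nodup := hc'.2.1
  have hLnd : (u :: (P ++ z :: t')).Nodup := by
    rw [hLperm.nodup_iff, List.nodup_append]
    exact ⟨hPnd, hnd', fun a ha b hb hab => hPdisj a ha (hab ▸ hr.mem_iff.2 hb)⟩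
  have hch' : List.Chain' G.Adj (u :: ((z :: t') ++ [u])) := (isCyc_cons_iff.1 hc').2.2
  have hLch : List.Chain' G.Adj (u :: ((P ++ z :: t') ++ [u])) := by
    have heq : u :: ((P ++ z :: t') ++ [u]) = (u :: P) ++ ((z :: t') ++ [u]) := by simp
    rw [heq]
    refine List.IsChain.append ?_ hch'.tail ?_
    · refine List.isChain_cons.2 ⟨?_, hPch⟩
      intro y hy
      rw [hhead, Option.mem_some_iff] at hy
      subst hy; exact hadju
    · intro a ha b hb
      rw [show u :: P = [u] ++ P from rfl, List.getLast?_append_of_ne_nil [u] hP, hlast, Option.mem_some_iff] at ha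
      rw [List.cons_append, List.head?_cons, Option.mem_some_iff] at hb
      subst ha; subst hb; exact hadjw
  have hP1 : 1 ≤ P.length := List.length_pos_iff.2 hP
  have hLcyc : IsCyc G (u :: (P ++ z :: t')) := by
    rw [isCyc_cons_iff]
    exact ⟨by simp; omega, hLnd, hLch⟩
  have hle := hlmax _ hLcyc
  have hll : l.length = (u :: z :: t').length := hr.perm.length_eq
  simp only [List.length_cons, List.length_append] at hle hll
  omega

lemma step3_core {G : SimpleGraph V} {l : List V} (hl : IsCyc G l)
    (hlmax : ∀ l', IsCyc G l' → l'.length ≤ l.length)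
    {u v : V} (hu : u ∈ l) (hv : v ∈ l) (huv : u ≠ v)
    (hnuv : nxt l u ≠ v) (hnvu : nxt l v ≠ u) (hadj : G.Adj (nxt l u) (nxt l v))
    {P : List V} (hP : P ≠ []) (hPnd : P.Nodup)
    (hPch : P.Chain' G.Adj) (hPdisj : ∀ w ∈ P, w ∉ l)
    {yu yv : V} (hhead : P.head? = some yu) (hlast : P.getLast? = some yv)
    (hadju : G.Adj u yu) (hadjv : G.Adj yv v) : False := by
  obtain ⟨t, hr⟩ := exists_rot hu
  have hvt : v ∈ t := by
    have h := hr.mem_iff.1 hv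
    rcases List.mem_cons.1 h with rfl | h
    · exact absurd rfl huv
    · exact h
  obtain ⟨X', Y, rfl⟩ := List.append_of_mem hvt
  have hY : Y ≠ [] := by
    rintro rfl
    exact hnvu (nxt_getLast hl.2.1 (A := X') (by simpa using hr))
  match Y, hY with
  | c :: Y', _ =>
  have hc : nxt l v = c := nxt_middle hl.2.1 (A := u :: X') (by simpa using hr)
  have hX' : X' ≠ [] := by
    rintro rfl
    exact hnuv (nxt_middle hl.2.1 (A := ([] : List V)) (by simpa using hr))
  match X', hX' with
  | d :: X, _ =>
  have hd : nxt l u = d := nxt_middle hl.2.1 (A := ([] : List V)) (by simpa using hr)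
  rw [hd, hc] at hadj
  have hrR : l ~r (u :: d :: (X ++ v :: c :: Y')) := by simpa using hr
  have hcR := hl.rotated hrR
  have hRnd := hcR.2.1
  have hRch : List.Chain' G.Adj (u :: ((d :: (X ++ v :: c :: Y')) ++ [u])) :=
    (isCyc_cons_iff.1 hcR).2.2
  -- pieces of the old chain
  have hch1 : List.Chain' G.Adj (d :: (X ++ [v])) := by
    refine hRch.infix ⟨[u], c :: Y' ++ [u], ?_⟩
    simp
  have hch2 : List.Chain' G.Adj (c :: (Y' ++ [u])) := by
    refine hRch.suffix ⟨u :: d :: X ++ [v], ?_⟩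
    simp
  have hlk : ∀ a ∈ (X ++ [v]).head?, G.Adj d a := (List.isChain_cons.1 hch1).1
  -- the new cycle
  have hLperm : (u :: (P ++ v :: (X.reverse ++ d :: c :: Y')))
      ~ P ++ (u :: d :: (X ++ v :: c :: Y')) := by
    have inner : (v :: (X.reverse ++ d :: c :: Y')) ~ (d :: (X ++ v :: c :: Y')) := by
      calc v :: (X.reverse ++ d :: c :: Y')
          ~ v :: d :: (X.reverse ++ c :: Y') := List.Perm.cons v List.perm_middle
        _ ~ d :: v :: (X.reverse ++ c :: Y') := List.Perm.swap d v _
        _ ~ d :: (X.reverse ++ v :: c :: Y') := List.Perm.cons d List.perm_middle.symm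
        _ ~ d :: (X ++ v :: c :: Y') :=
            List.Perm.cons d (List.Perm.append (List.reverse_perm X) (List.Perm.refl _))
    calc u :: (P ++ v :: (X.reverse ++ d :: c :: Y'))
        ~ P ++ u :: (v :: (X.reverse ++ d :: c :: Y')) := List.perm_middle.symm
      _ ~ P ++ u :: (d :: (X ++ v :: c :: Y')) := List.Perm.append_left P (List.Perm.cons u inner)
  have hLnd : (u :: (P ++ v :: (X.reverse ++ d :: c :: Y'))).Nodup := by
    rw [hLperm.nodup_iff, List.nodup_append]
    exact ⟨hPnd, hRnd, fun a ha b hb hab => hPdisj a ha (hab ▸ hrR.mem_iff.2 hb)⟩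
  have hLch : List.Chain' G.Adj
      (u :: ((P ++ v :: (X.reverse ++ d :: c :: Y')) ++ [u])) := by
    have heq : u :: ((P ++ v :: (X.reverse ++ d :: c :: Y')) ++ [u])
        = (u :: P) ++ ((v :: X.reverse) ++ (d :: c :: (Y' ++ [u]))) := by simp
    rw [heq]
    have hS1 : List.Chain' G.Adj (u :: P) := by
      refine List.isChain_cons.2 ⟨?_, hPch⟩
      intro y hy
      rw [hhead, Option.mem_some_iff] at hy
      subst hy; exact hadju
    have hS2 : List.Chain' G.Adj (v :: X.reverse) := by
      have heq2 : (v :: X.reverse) = (X ++ [v]).reverse := by simp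
      rw [heq2]; unfold List.Chain'; rw [List.isChain_reverse]
      exact hch1.tail.imp fun a b h => h.symm
    have hS3 : List.Chain' G.Adj (d :: c :: (Y' ++ [u])) :=
      List.isChain_cons_cons.2 ⟨hadj, hch2⟩
    refine List.IsChain.append hS1 (List.IsChain.append hS2 hS3 ?_) ?_
    · intro a ha b hb
      have heq2 : (v :: X.reverse) = (X ++ [v]).reverse := by simp
      rw [heq2, List.getLast?_reverse] at ha
      rw [List.head?_cons, Option.mem_some_iff] at hb
      subst hb
      exact (hlk a ha).symm
    · intro a ha b hb
      rw [show u :: P = [u] ++ P from rfl, List.getLast?_append_of_ne_nil [u] hP, hlast, Option.mem_some_iff] at ha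
      rw [List.cons_append, List.head?_cons, Option.mem_some_iff] at hb
      subst ha; subst hb; exact hadjv
  have hP1 : 1 ≤ P.length := List.length_pos_iff.2 hP
  have hLcyc : IsCyc G (u :: (P ++ v :: (X.reverse ++ d :: c :: Y'))) := by
    rw [isCyc_cons_iff]
    exact ⟨by simp; omega, hLnd, hLch⟩
  have hle := hlmax _ hLcyc
  have hll : l.length = (u :: d :: (X ++ v :: c :: Y')).length := hrR.perm.length_eq
  simp only [List.length_cons, List.length_append, List.length_reverse] at hle hll
  omega


end CE

namespace CE
lemma getLast?_map {α β : Type*} (f : α → β) (l : List α) :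
    (l.map f).getLast? = l.getLast?.map f := by
  have h1 := List.getLast?_reverse (l := (l.map f).reverse)
  have h2 := List.getLast?_reverse (l := l.reverse)
  rw [List.reverse_reverse] at h1 h2
  rw [h1, h2, ← List.map_reverse]
  cases l.reverse <;> simp

lemma reach_pred {W : Type*} {H : SimpleGraph W} (Q : W → Prop)
    (hstep : ∀ a b, H.Adj a b → Q a → Q b) {a b : W} (h : H.Reachable a b) (ha : Q a) : Q b := by
  obtain ⟨p⟩ := h
  induction p with
  | nil => exact ha
  | cons h q ih => exact ih (hstep _ _ h ha)

theorem chvatal_erdos_ham {G : SimpleGraph V} {k : ℕ}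
    (hn : 3 ≤ Fintype.card V) (hk : G.IsKConnected k)
    (hα : ∀ s : Finset V, G.IsIndependentSet s → s.card ≤ k) :
    G.IsHamiltonian := by
  classical
  obtain ⟨l0, hl0⟩ := exists_isCyc hn hk hα
  obtain ⟨l, hl, hlmax⟩ := exists_max_list (IsCyc G) ⟨l0, hl0⟩ (fun l h => h.2.1.length_le_card)
  by_cases hall : ∀ v : V, v ∈ l
  · exact hamCycle_of_isCyc hl hall
  push_neg at hall
  obtain ⟨x, hx⟩ := hall
  exfalso
  set Ol : Set V := {v : V | v ∉ l} with hOl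
  have hx' : x ∈ Ol := hx
  set Hs : Set V := {y : V | ∃ b : Ol, (b : V) = y ∧ (G.induce Ol).Reachable ⟨x, hx'⟩ b}
    with hHs
  have hxH : x ∈ Hs := ⟨⟨x, hx'⟩, rfl, Reachable.refl _⟩
  have hHC : ∀ y ∈ Hs, y ∉ l := by rintro y ⟨b, rfl, -⟩; exact b.2
  have hclosed : ∀ y ∈ Hs, ∀ z, G.Adj y z → z ∉ l → z ∈ Hs := by
    rintro y ⟨b, rfl, hr⟩ z hadj hz
    refine ⟨⟨z, hz⟩, rfl, hr.trans (SimpleGraph.Adj.reachable ?_)⟩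
    exact hadj
  have hpath : ∀ y ∈ Hs, ∀ z ∈ Hs, ∃ P : List V, P ≠ [] ∧ P.Nodup ∧ P.Chain' G.Adj ∧
      P.head? = some y ∧ P.getLast? = some z ∧ ∀ w ∈ P, w ∈ Hs := by
    rintro y ⟨b, rfl, hrb⟩ z ⟨c, rfl, hrc⟩
    obtain ⟨q⟩ := hrb.symm.trans hrc
    refine ⟨q.toPath.1.support.map Subtype.val,
      by intro h; exact q.toPath.1.support_ne_nil (List.map_eq_nil_iff.1 h),
      q.toPath.2.support_nodup.map Subtype.val_injective, ?_, ?_, ?_, ?_⟩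
    · unfold List.Chain'; rw [List.isChain_map]
      exact (Walk.isChain_adj_support q.toPath.1).imp (fun a b h => h)
    · rw [q.toPath.1.support_eq_cons, List.map_cons, List.head?_cons]
    · have h2 := List.getLast?_reverse (l := q.toPath.1.support.reverse)
      rw [List.reverse_reverse] at h2
      rw [getLast?_map, h2, ← Walk.support_reverse, (q.toPath.1.reverse).support_eq_cons]
      simp
    · intro w hw
      rw [List.mem_map] at hw
      obtain ⟨a, ha, rfl⟩ := hw
      exact ⟨a, rfl, hrb.trans ⟨q.toPath.1.takeUntil a ha⟩⟩
  set A : Finset V := Finset.univ.filter (fun u => u ∈ l ∧ ∃ y ∈ Hs, G.Adj u y) with hA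
  have mem_A : ∀ u, u ∈ A ↔ (u ∈ l ∧ ∃ y ∈ Hs, G.Adj u y) := by
    intro u; rw [hA, Finset.mem_filter]; simp
  have step1 : ∀ u ∈ A, nxt l u ∉ A := by
    intro u huA hwA
    obtain ⟨hul, yu, hyu, hadju⟩ := (mem_A u).1 huA
    obtain ⟨hwl, yw, hyw, hadjw⟩ := (mem_A _).1 hwA
    obtain ⟨P, hP, hPnd, hPch, hhead, hlast, hPH⟩ := hpath yu hyu yw hyw
    exact step1_core hl hlmax hul hP hPnd hPch (fun w hw => hHC w (hPH w hw))
      hhead hlast hadju hadjw.symm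
  have step3 : ∀ u ∈ A, ∀ v ∈ A, u ≠ v → ¬ G.Adj (nxt l u) (nxt l v) := by
    intro u huA v hvA huv hadj
    obtain ⟨hul, yu, hyu, hadju⟩ := (mem_A u).1 huA
    obtain ⟨hvl, yv, hyv, hadjv⟩ := (mem_A v).1 hvA
    have hnuv : nxt l u ≠ v := fun h => step1 u huA (h ▸ hvA)
    have hnvu : nxt l v ≠ u := fun h => step1 v hvA (h ▸ huA)
    obtain ⟨P, hP, hPnd, hPch, hhead, hlast, hPH⟩ := hpath yu hyu yv hyv
    exact step3_core hl hlmax hul hvl huv hnuv hnvu hadj hP hPnd hPch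
      (fun w hw => hHC w (hPH w hw)) hhead hlast hadju hadjv.symm
  have hlne : l ≠ [] := by rintro rfl; simpa using hl.1
  have step4 : k ≤ A.card := by
    by_contra hcard
    push_neg at hcard
    have hconn := hk.2 A hcard
    obtain ⟨w, hwl, hwA⟩ : ∃ w, w ∈ l ∧ w ∉ A := by
      by_cases h0 : l.head hlne ∈ A
      · exact ⟨nxt l (l.head hlne), nxt_mem (List.head_mem hlne), step1 _ h0⟩
      · exact ⟨l.head hlne, List.head_mem hlne, h0⟩
    have hxA : x ∈ ((↑A : Set V)ᶜ) := by
      simp only [Set.mem_compl_iff, Finset.mem_coe]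
      intro hxA'
      exact hx ((mem_A x).1 hxA').1
    have hwA' : w ∈ ((↑A : Set V)ᶜ) := by
      simp only [Set.mem_compl_iff, Finset.mem_coe]; exact hwA
    have hreach := hconn.preconnected ⟨x, hxA⟩ ⟨w, hwA'⟩
    have hwHs : w ∈ Hs := by
      refine reach_pred (fun b : ↥((↑A : Set V)ᶜ) => (b : V) ∈ Hs) ?_ hreach hxH
      intro a b hab haH
      have hadj : G.Adj (a : V) (b : V) := hab
      by_cases hbl : (b : V) ∈ l
      · exact absurd ((mem_A _).2 ⟨hbl, ⟨a, haH, hadj.symm⟩⟩) (by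
          have := b.2
          simpa only [Set.mem_compl_iff, Finset.mem_coe] using this)
      · exact hclosed _ haH _ hadj hbl
    exact hHC w hwHs hwl
  -- independent set of size A.card + 1
  have hAsub : ∀ u ∈ A, u ∈ l := fun u hu => ((mem_A u).1 hu).1
  set S : Finset V := A.image (nxt l) ∪ {x} with hS
  have hximg : x ∉ A.image (nxt l) := by
    simp only [Finset.mem_image]
    rintro ⟨u, hu, hux⟩
    exact hx (hux ▸ nxt_mem (hAsub u hu))
  have hcardS : S.card = A.card + 1 := by
    rw [hS, Finset.card_union_of_disjoint (by simpa using hximg),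
      Finset.card_image_of_injOn (fun a ha b hb h =>
        nxt_inj hl.2.1 (hAsub a ha) (hAsub b hb) h), Finset.card_singleton]
  have hindep : G.IsIndependentSet S := by
    intro a haS b hbS hadj
    rw [hS, Finset.mem_union, Finset.mem_image, Finset.mem_singleton] at haS hbS
    rcases haS with ⟨u, huA, rfl⟩ | rfl
    · rcases hbS with ⟨v, hvA, rfl⟩ | rfl
      · by_cases huv : u = v
        · subst huv; exact G.loopless.irrefl _ hadj
        · exact step3 u huA v hvA huv hadj
      · -- nxt l u adjacent to x ∈ Hs
        have : nxt l u ∈ A := (mem_A _).2 ⟨nxt_mem (hAsub u huA), ⟨_, hxH, hadj⟩⟩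
        exact step1 u huA this
    · rcases hbS with ⟨v, hvA, rfl⟩ | rfl
      · have : nxt l v ∈ A := (mem_A _).2 ⟨nxt_mem (hAsub v hvA), ⟨_, hxH, hadj.symm⟩⟩
        exact step1 v hvA this
      · exact G.loopless.irrefl _ hadj
  have := hα S hindep
  omega

end CE

theorem chvatal_erdos_hamiltonian (G : SimpleGraph V) (k : ℕ)
    (hn : 3 ≤ Fintype.card V) (hk : G.IsKConnected k)
    (hα : ∀ s : Finset V, G.IsIndependentSet s → s.card ≤ k) :
    G.IsHamiltonian := CE.chvatal_erdos_ham hn hk hα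
end

section
/- If G is a k-connected graph on n ≥ 3 vertices and α(G) ≤ k + 1, then G is traceable. -/
open SimpleGraph Finset Matrix

variable {V : Type*} [Fintype V] [DecidableEq V]

section CEAux
set_option linter.unusedSectionVars false

variable {V : Type*} [Fintype V] [DecidableEq V]

private lemma ce_chain_reverse {G : SimpleGraph V} {l : List V} (h : l.Chain' G.Adj) :
    l.reverse.Chain' G.Adj :=
  List.isChain_reverse.mpr (h.imp fun _ _ hab => hab.symm)

private lemma ce_some_or {α : Type*} (a : α) (o : Option α) : (some a).or o = some a := rfl

private lemma ce_glast {α : Type*} (P : List α) (z : α) : (P ++ [z]).getLast? = some z := by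
  rw [List.getLast?_append_of_ne_nil P (by simp)]; rfl

private lemma ce_split_unique {x : V} {l A B A' B' : List V} (h : l.Nodup)
    (h1 : l = A ++ x :: B) (h2 : l = A' ++ x :: B') : A = A' ∧ B = B' := by
  have hxA : x ∉ A := fun hx =>
    (List.disjoint_of_nodup_append (h1 ▸ h)) hx (List.mem_cons_self (a := x) (l := B))
  have hxA' : x ∉ A' := fun hx =>
    (List.disjoint_of_nodup_append (h2 ▸ h)) hx (List.mem_cons_self (a := x) (l := B'))
  have hlen : A.length = A'.length := by
    have e1 : List.idxOf x l = A.length := by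
      rw [h1, List.idxOf_append_of_notMem hxA, List.idxOf_cons_self]; omega
    have e2 : List.idxOf x l = A'.length := by
      rw [h2, List.idxOf_append_of_notMem hxA', List.idxOf_cons_self]; omega
    omega
  have h3 : A ++ x :: B = A' ++ x :: B' := h1.symm.trans h2
  obtain ⟨hA, hB⟩ := List.append_inj h3 hlen
  refine ⟨hA, ?_⟩
  simpa using hB

private lemma ce_pred_unique {x x' y : V} {l A B A' B' : List V} (h : l.Nodup)
    (h1 : l = A ++ x :: y :: B) (h2 : l = A' ++ x' :: y :: B') : x = x' := by
  have h1' : l = (A ++ [x]) ++ y :: B := by rw [h1]; simp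
  have h2' : l = (A' ++ [x']) ++ y :: B' := by rw [h2]; simp
  have h3 := (ce_split_unique h h1' h2').1
  have h4 := congrArg List.getLast? h3
  rw [ce_glast, ce_glast] at h4
  exact Option.some.inj h4

private lemma ce_walk_of_chain {G : SimpleGraph V} :
    ∀ (l : List V), l ≠ [] → l.Chain' G.Adj →
      ∃ (u v : V) (p : G.Walk u v), p.support = l := by
  intro l
  induction l with
  | nil => intro h; exact absurd rfl h
  | cons a t ih =>
    intro _ hc
    cases t with
    | nil => exact ⟨a, a, SimpleGraph.Walk.nil, rfl⟩
    | cons b t' =>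
      obtain ⟨hab, hc'⟩ := List.isChain_cons_cons.mp hc
      obtain ⟨u, v, p, hp⟩ := ih (List.cons_ne_nil _ _) hc'
      have h2 := p.support_eq_cons
      rw [hp] at h2
      injection h2 with h3 h4
      subst h3
      exact ⟨a, v, SimpleGraph.Walk.cons hab p, by rw [SimpleGraph.Walk.support_cons, hp]⟩

private lemma ce_main {G : SimpleGraph V} {k : ℕ} (hk : G.IsKConnected k)
    (hα : ∀ s : Finset V, G.IsIndependentSet s → s.card ≤ k + 1)
    (l : List V) (hl : l ≠ []) (hc : l.Chain' G.Adj) (hnd : l.Nodup)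
    (hmax : ∀ l' : List V, l'.Chain' G.Adj → l'.Nodup → l'.length ≤ l.length)
    (hlt : l.length < Fintype.card V) : False := by
  classical
  -- a vertex outside l
  obtain ⟨w, hw⟩ : ∃ w : V, w ∉ l := by
    by_contra h
    push_neg at h
    have h2 : (Finset.univ : Finset V).card ≤ l.toFinset.card :=
      Finset.card_le_card (fun v _ => List.mem_toFinset.mpr (h v))
    rw [List.toFinset_card_of_nodup hnd, Finset.card_univ] at h2
    omega
  set v₁ := l.head hl with hv₁
  have hlhead : l.head? = some v₁ := List.head?_eq_head hl
  have hllast : l.getLast? = some (l.getLast hl) := List.getLast?_eq_getLast hl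
  have hv₁l : v₁ ∈ l := List.head_mem hl
  -- the component of w outside l
  set H : Set V := {x | ∃ q : G.Walk w x, ∀ y ∈ q.support, y ∉ l} with hHdef
  have hHiff : ∀ x, x ∈ H ↔ ∃ q : G.Walk w x, ∀ y ∈ q.support, y ∉ l := by
    intro x; rw [hHdef]; rfl
  have hwH : w ∈ H := (hHiff w).mpr ⟨SimpleGraph.Walk.nil, by simpa using hw⟩
  have hHl : ∀ x ∈ H, x ∉ l := by
    intro x hx
    obtain ⟨q, hq⟩ := (hHiff x).mp hx
    exact hq x q.end_mem_support
  have hHadj : ∀ x ∈ H, ∀ y, G.Adj x y → y ∉ l → y ∈ H := by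
    intro x hx y hxy hy
    obtain ⟨q, hq⟩ := (hHiff x).mp hx
    refine (hHiff y).mpr ⟨q.concat hxy, ?_⟩
    intro z hz
    rw [SimpleGraph.Walk.support_concat] at hz
    rcases List.mem_append.mp hz with h | h
    · exact hq z h
    · rw [List.mem_singleton] at h; subst h; exact hy
  -- paths inside H
  have hHpath : ∀ h₁ ∈ H, ∀ h₂ ∈ H, ∃ Q : List V, Q.Chain' G.Adj ∧ Q.Nodup ∧
      Q.head? = some h₁ ∧ Q.getLast? = some h₂ ∧ ∀ z ∈ Q, z ∉ l := by
    intro h₁ hh₁ h₂ hh₂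
    obtain ⟨q₁, hq₁⟩ := (hHiff h₁).mp hh₁
    obtain ⟨q₂, hq₂⟩ := (hHiff h₂).mp hh₂
    set q := (q₁.reverse.append q₂).bypass with hqdef
    refine ⟨q.support, q.isChain_adj_support, ((q₁.reverse.append q₂).bypass_isPath).support_nodup,
      by rw [q.support_eq_cons]; rfl, ?_, ?_⟩
    · rw [← List.head?_reverse, ← SimpleGraph.Walk.support_reverse, SimpleGraph.Walk.support_eq_cons]
      rfl
    · intro z hz
      have hz2 := (q₁.reverse.append q₂).support_bypass_subset hz
      rw [SimpleGraph.Walk.support_append] at hz2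
      rcases List.mem_append.mp hz2 with h | h
      · rw [SimpleGraph.Walk.support_reverse] at h
        exact hq₁ z (List.mem_reverse.mp h)
      · exact hq₂ z (List.mem_of_mem_tail h)
  -- the master contradiction: no strictly longer chain
  have contra : ∀ (l' Q' : List V), l'.Chain' G.Adj → Q' ≠ [] → (∀ z ∈ Q', z ∉ l) → Q'.Nodup →
      l'.Perm (l ++ Q') → False := by
    intro l' Q' hc' hQne hQl hQnd hperm
    have hnd' : l'.Nodup := hperm.nodup_iff.mpr (hnd.append hQnd (fun a ha haQ => hQl a haQ ha))
    have h1 := hmax l' hc' hnd'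
    rw [hperm.length_eq, List.length_append] at h1
    have h2 : Q'.length = 0 := by omega
    exact hQne (List.length_eq_zero_iff.mp h2)
  -- endpoints of l have no neighbor in H
  have hlast : ∀ h ∈ H, ¬ G.Adj (l.getLast hl) h := by
    intro h hh hadj
    refine contra (l ++ [h]) [h] ?_ (by simp) (by simpa using hHl h hh) (by simp) (List.Perm.refl _)
    refine List.isChain_append.mpr ⟨hc, List.isChain_singleton h, ?_⟩
    intro x hx y hy
    rw [hllast, Option.mem_some_iff] at hx
    simp only [List.head?_cons, Option.mem_some_iff] at hy
    subst hx; subst hy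
    exact hadj
  have hhead : ∀ h ∈ H, ¬ G.Adj v₁ h := by
    intro h hh hadj
    refine contra (l.reverse ++ [h]) [h] ?_ (by simp) (by simpa using hHl h hh) (by simp)
      (l.reverse_perm.append_right [h])
    refine List.isChain_append.mpr ⟨ce_chain_reverse hc, List.isChain_singleton h, ?_⟩
    intro x hx y hy
    rw [List.getLast?_reverse, hlhead, Option.mem_some_iff] at hx
    simp only [List.head?_cons, Option.mem_some_iff] at hy
    subst hx; subst hy
    exact hadj
  -- the neighborhood of H on l
  set N : Finset V := l.toFinset.filter (fun x => ∃ h ∈ H, G.Adj x h) with hNdef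
  have hNmem : ∀ x, x ∈ N ↔ x ∈ l ∧ ∃ h ∈ H, G.Adj x h := by
    intro x; rw [hNdef]; simp
  have hNlast : ∀ x ∈ N, x ≠ l.getLast hl := by
    rintro x hx rfl
    obtain ⟨-, h, hh, hadj⟩ := (hNmem _).mp hx
    exact hlast h hh hadj
  have hNhead : v₁ ∉ N := by
    intro hx
    obtain ⟨-, h, hh, hadj⟩ := (hNmem _).mp hx
    exact hhead h hh hadj
  -- decomposition at an element of N, with successor
  have hdecomp : ∀ x ∈ N, ∃ y A B, l = A ++ x :: y :: B := by
    intro x hx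
    obtain ⟨hxl, -⟩ := (hNmem _).mp hx
    obtain ⟨A, B, hAB⟩ := List.append_of_mem hxl
    cases B with
    | nil =>
      exfalso
      apply hNlast x hx
      have h9 : l.getLast? = some x := by rw [hAB]; exact ce_glast A x
      rw [hllast] at h9
      exact (Option.some.inj h9).symm
    | cons y B' => exact ⟨y, A, B', hAB⟩
  -- the successor function
  set f : V → V := fun x => if hx : ∃ y A B, l = A ++ x :: y :: B then hx.choose else x with hfdef
  have hf : ∀ x ∈ N, ∃ A B, l = A ++ x :: f x :: B := by
    intro x hx
    have hex : ∃ y A B, l = A ++ x :: y :: B := hdecomp x hx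
    rw [hfdef]
    simp only [dif_pos hex]
    exact hex.choose_spec
  have hfeq : ∀ {x y : V} {A B : List V}, l = A ++ x :: y :: B → x ∈ N → f x = y := by
    intro x y A B hAB hx
    obtain ⟨A', B', hAB'⟩ := hf x hx
    have h9 := (ce_split_unique hnd hAB' hAB).2
    simpa using congrArg List.head? h9
  have hfmem : ∀ x ∈ N, f x ∈ l := by
    intro x hx
    obtain ⟨A, B, hAB⟩ := hf x hx
    rw [hAB]; simp
  have hfne : ∀ x ∈ N, f x ≠ v₁ := by
    intro x hx h
    obtain ⟨A, B, hAB⟩ := hf x hx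
    have h1 : l = [] ++ v₁ :: l.tail := (List.cons_head_tail hl).symm
    have h2 : l = (A ++ [x]) ++ v₁ :: B := by rw [hAB, h]; simp
    have h3 := (ce_split_unique hnd h1 h2).1
    simp at h3
  have hfinj : ∀ x ∈ N, ∀ y ∈ N, f x = f y → x = y := by
    intro x hx y hy hxy
    obtain ⟨A, B, hAB⟩ := hf x hx
    obtain ⟨A', B', hAB'⟩ := hf y hy
    rw [hxy] at hAB
    exact ce_pred_unique hnd hAB hAB'
  -- ordering of two elements of N along l
  have hjoint : ∀ x ∈ N, ∀ y ∈ N, x ≠ y →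
      (∃ A E C, l = A ++ x :: (E ++ y :: C)) ∨ (∃ A E C, l = A ++ y :: (E ++ x :: C)) := by
    intro x hx y hy hne
    obtain ⟨hyl, -⟩ := (hNmem _).mp hy
    obtain ⟨D, C, hDC⟩ := List.append_of_mem hyl
    obtain ⟨hxl, -⟩ := (hNmem _).mp hx
    rw [hDC] at hxl
    rcases List.mem_append.mp hxl with hxD | hxC
    · obtain ⟨A, E, hAE⟩ := List.append_of_mem hxD
      left; exact ⟨A, E, C, by rw [hDC, hAE]; simp⟩
    · rcases List.mem_cons.mp hxC with h | hxC
      · exact absurd h hne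
      · obtain ⟨E, C', hEC⟩ := List.append_of_mem hxC
        right; exact ⟨D, E, C', by rw [hDC, hEC]⟩
  -- claim (i): no vertex of H is adjacent to a successor
  have claim_i : ∀ x ∈ N, ∀ h' ∈ H, ¬ G.Adj h' (f x) := by
    intro x hx h' hh' hadj
    obtain ⟨hxl, h_x, hhx, hadjx⟩ := (hNmem _).mp hx
    obtain ⟨A, B, hAB⟩ := hf x hx
    obtain ⟨Q, hQc, hQnd, hQh, hQg, hQavoid⟩ := hHpath h_x hhx h' hh'
    refine contra ((A ++ [x]) ++ (Q ++ (f x :: B))) Q ?_ (by rintro rfl; simp at hQh)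
      hQavoid hQnd ?_
    · refine List.isChain_append.mpr ⟨?_, List.isChain_append.mpr ⟨hQc, ?_, ?_⟩, ?_⟩
      · exact hc.prefix ⟨f x :: B, by rw [hAB]; simp⟩
      · exact hc.suffix ⟨A ++ [x], by rw [hAB]; simp⟩
      · intro a ha b hb
        rw [hQg, Option.mem_some_iff] at ha
        simp only [List.head?_cons, Option.mem_some_iff] at hb
        subst ha; subst hb
        exact hadj
      · intro a ha b hb
        rw [ce_glast, Option.mem_some_iff] at ha
        rw [List.head?_append, hQh, ce_some_or, Option.mem_some_iff] at hb
        subst ha; subst hb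
        exact hadjx
    · rw [hAB]
      refine List.perm_iff_count.mpr fun a => ?_
      simp [List.count_append, List.count_cons]
      omega
  -- claim (iii): v₁ is not adjacent to a successor
  have claim_iii : ∀ x ∈ N, ¬ G.Adj v₁ (f x) := by
    intro x hx hadj
    obtain ⟨hxl, h_x, hhx, hadjx⟩ := (hNmem _).mp hx
    obtain ⟨A, B, hAB⟩ := hf x hx
    refine contra ([h_x] ++ ((A ++ [x]).reverse ++ (f x :: B))) [h_x] ?_ (by simp)
      (by simpa using hHl _ hhx) (by simp) ?_
    · refine List.isChain_append.mpr ⟨List.isChain_singleton _,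
        List.isChain_append.mpr ⟨?_, ?_, ?_⟩, ?_⟩
      · exact ce_chain_reverse (hc.prefix ⟨f x :: B, by rw [hAB]; simp⟩)
      · exact hc.suffix ⟨A ++ [x], by rw [hAB]; simp⟩
      · intro a ha b hb
        rw [List.getLast?_reverse] at ha
        have h9 : (A ++ [x]).head? = some v₁ := by
          have h8 := hlhead
          rw [hAB, List.head?_append] at h8
          rw [List.head?_append]
          cases hA : A.head? <;> simp [hA] at h8 ⊢ <;> exact h8
        rw [h9, Option.mem_some_iff] at ha
        simp only [List.head?_cons, Option.mem_some_iff] at hb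
        subst ha; subst hb
        exact hadj
      · intro a ha b hb
        simp only [List.getLast?_singleton, Option.mem_some_iff] at ha
        rw [List.head?_append, List.head?_reverse, ce_glast, ce_some_or,
          Option.mem_some_iff] at hb
        subst ha; subst hb
        exact hadjx.symm
    · rw [hAB]
      refine List.perm_iff_count.mpr fun a => ?_
      simp [List.count_append, List.count_cons, List.count_reverse]
      omega
  -- claim (ii): successors are pairwise non-adjacent (ordered version)
  have claim_ii : ∀ x ∈ N, ∀ y ∈ N, (∃ A E C, l = A ++ x :: (E ++ y :: C)) →
      ¬ G.Adj (f x) (f y) := by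
    intro x hx y hy hma hadj
    obtain ⟨A, E, C, hAEC⟩ := hma
    obtain ⟨hxl, h_x, hhx, hadjx⟩ := (hNmem _).mp hx
    obtain ⟨hyl, h_y, hhy, hadjy⟩ := (hNmem _).mp hy
    cases C with
    | nil =>
      apply hNlast y hy
      have h9 : l.getLast? = some y := by
        rw [hAEC, show A ++ x :: (E ++ [y]) = (A ++ x :: E) ++ [y] by simp]
        exact ce_glast _ _
      rw [hllast] at h9
      exact (Option.some.inj h9).symm
    | cons c C' =>
      have hfy : f y = c := hfeq (show l = (A ++ x :: E) ++ y :: c :: C' by rw [hAEC]; simp) hy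
      have hfx : (E ++ [y]).head? = some (f x) := by
        cases E with
        | nil =>
          have := hfeq (show l = A ++ x :: y :: (c :: C') by simpa using hAEC) hx
          simp [this]
        | cons e E' =>
          have := hfeq (show l = A ++ x :: e :: (E' ++ y :: c :: C') by simpa using hAEC) hx
          simp [this]
      obtain ⟨Q, hQc, hQnd, hQh, hQg, hQavoid⟩ := hHpath h_x hhx h_y hhy
      refine contra ((A ++ [x]) ++ (Q ++ ((E ++ [y]).reverse ++ (c :: C')))) Q ?_
        (by rintro rfl; simp at hQh) hQavoid hQnd ?_
      · refine List.isChain_append.mpr ⟨?_,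
          List.isChain_append.mpr ⟨hQc, List.isChain_append.mpr ⟨?_, ?_, ?_⟩, ?_⟩, ?_⟩
        · exact hc.prefix ⟨E ++ y :: c :: C', by rw [hAEC]; simp⟩
        · exact ce_chain_reverse (hc.infix ⟨A ++ [x], c :: C', by rw [hAEC]; simp⟩)
        · exact hc.suffix ⟨A ++ x :: (E ++ [y]), by rw [hAEC]; simp⟩
        · intro a ha b hb
          rw [List.getLast?_reverse, hfx, Option.mem_some_iff] at ha
          simp only [List.head?_cons, Option.mem_some_iff] at hb
          subst ha; subst hb
          exact hfy ▸ hadj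
        · intro a ha b hb
          rw [hQg, Option.mem_some_iff] at ha
          rw [List.head?_append, List.head?_reverse, ce_glast, ce_some_or,
            Option.mem_some_iff] at hb
          subst ha; subst hb
          exact hadjy.symm
        · intro a ha b hb
          rw [ce_glast, Option.mem_some_iff] at ha
          rw [List.head?_append, hQh, ce_some_or, Option.mem_some_iff] at hb
          subst ha; subst hb
          exact hadjx
      · rw [hAEC]
        refine List.perm_iff_count.mpr fun a => ?_
        simp [List.count_append, List.count_cons, List.count_reverse]
        omega
  -- the connectivity bound: |N| ≥ k
  have hNcard : k ≤ N.card := by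
    by_contra hlt2
    push_neg at hlt2
    have hconn := hk.2 N hlt2
    have hwmem : w ∈ ((↑N : Set V)ᶜ : Set V) := by
      simp only [Set.mem_compl_iff, Finset.mem_coe]
      intro hmem
      exact hw (((hNmem _).mp hmem).1)
    have hv₁mem : v₁ ∈ ((↑N : Set V)ᶜ : Set V) := by
      simp only [Set.mem_compl_iff, Finset.mem_coe]
      exact hNhead
    obtain ⟨q⟩ := hconn.preconnected ⟨w, hwmem⟩ ⟨v₁, hv₁mem⟩
    have hinv : ∀ (a b : ((↑N : Set V)ᶜ : Set V)) (q : (G.induce ((↑N : Set V)ᶜ)).Walk a b),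
        (a : V) ∈ H → (b : V) ∈ H := by
      intro a b q
      induction q with
      | nil => exact id
      | @cons u c b hadj p ih =>
        intro ha
        apply ih
        have hadj' : G.Adj (u : V) (c : V) := hadj
        by_cases hcl : (c : V) ∈ l
        · exfalso
          have hcm : (c : V) ∈ N := (hNmem _).mpr ⟨hcl, ⟨(u : V), ha, hadj'.symm⟩⟩
          exact c.2 (Finset.mem_coe.mpr hcm)
        · exact hHadj _ ha _ hadj' hcl
    exact hHl v₁ (hinv _ _ q hwH) hv₁l
  -- the independent set
  set X : Finset V := insert w (insert v₁ (N.image f)) with hXdef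
  have himage : ∀ a ∈ N.image f, a ∈ l := by
    intro a ha
    obtain ⟨x, hx, rfl⟩ := Finset.mem_image.mp ha
    exact hfmem x hx
  have himgcard : (N.image f).card = N.card :=
    Finset.card_image_of_injOn (fun x hx y hy h =>
      hfinj x (by simpa using hx) y (by simpa using hy) h)
  have hv₁img : v₁ ∉ N.image f := by
    intro hmem
    obtain ⟨x, hx, hfx⟩ := Finset.mem_image.mp hmem
    exact hfne x hx hfx
  have hwins : w ∉ insert v₁ (N.image f) := by
    intro hmem
    rcases Finset.mem_insert.mp hmem with h | h
    · exact hw (h ▸ hv₁l)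
    · exact hw (himage _ h)
  have hcardX : X.card = N.card + 2 := by
    rw [hXdef, Finset.card_insert_of_notMem hwins, Finset.card_insert_of_notMem hv₁img,
      himgcard]
  have hXmem : ∀ a, a ∈ X ↔ a = w ∨ a = v₁ ∨ ∃ x ∈ N, f x = a := by
    intro a; rw [hXdef]; simp
  have hind : G.IsIndependentSet X := by
    intro a ha b hb hadj
    rcases (hXmem a).mp ha with rfl | rfl | ⟨x, hx, rfl⟩ <;>
      rcases (hXmem b).mp hb with rfl | rfl | ⟨y, hy, rfl⟩
    · exact G.loopless.irrefl _ hadj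
    · exact hhead a hwH hadj.symm
    · exact claim_i y hy a hwH hadj
    · exact hhead b hwH hadj
    · exact G.loopless.irrefl _ hadj
    · exact claim_iii y hy hadj
    · exact claim_i x hx b hwH hadj.symm
    · exact claim_iii x hx hadj.symm
    · by_cases hxy : x = y
      · subst hxy; exact G.loopless.irrefl _ hadj
      · rcases hjoint x hx y hy hxy with hord | hord
        · exact claim_ii x hx y hy hord hadj
        · exact claim_ii y hy x hx hord hadj.symm
  have hle := hα X hind
  omega

end CEAux

theorem chvatal_erdos_traceable (G : SimpleGraph V) (k : ℕ)
    (hn : 3 ≤ Fintype.card V) (hk : G.IsKConnected k)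
    (hα : ∀ s : Finset V, G.IsIndependentSet s → s.card ≤ k + 1) :
    G.IsTraceable := by
  classical
  have hP1 : ∃ l : List V, l.Chain' G.Adj ∧ l.Nodup ∧ l.length = 1 := by
    have hne : Nonempty V := Fintype.card_pos_iff.mp (by omega)
    obtain ⟨v⟩ := hne
    exact ⟨[v], List.isChain_singleton v, List.nodup_singleton v, rfl⟩
  have hM1 : 1 ≤ Nat.findGreatest
      (fun m => ∃ l : List V, l.Chain' G.Adj ∧ l.Nodup ∧ l.length = m) (Fintype.card V) :=
    Nat.le_findGreatest (by omega) hP1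
  obtain ⟨l, hc, hnd, hlen⟩ :
      ∃ l : List V, l.Chain' G.Adj ∧ l.Nodup ∧ l.length = Nat.findGreatest
        (fun m => ∃ l : List V, l.Chain' G.Adj ∧ l.Nodup ∧ l.length = m) (Fintype.card V) :=
    Nat.findGreatest_spec (P := fun m => ∃ l : List V, l.Chain' G.Adj ∧ l.Nodup ∧ l.length = m)
      (m := 1) (show 1 ≤ Fintype.card V by omega) hP1
  have hmax : ∀ l' : List V, l'.Chain' G.Adj → l'.Nodup → l'.length ≤ l.length := by
    intro l' h1 h2
    by_contra hgt
    push_neg at hgt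
    exact Nat.findGreatest_is_greatest
      (P := fun m => ∃ l : List V, l.Chain' G.Adj ∧ l.Nodup ∧ l.length = m)
      (by omega) h2.length_le_card ⟨l', h1, h2, rfl⟩
  have hl : l ≠ [] := by
    intro h
    rw [h] at hlen
    simp at hlen
    omega
  by_cases hfull : l.length = Fintype.card V
  · obtain ⟨u, v, p, hp⟩ := ce_walk_of_chain l hl hc
    refine ⟨u, v, p, fun x => ?_⟩
    rw [hp]
    refine List.count_eq_one_of_mem hnd ?_
    have h2 : l.toFinset = Finset.univ :=
      Finset.eq_univ_of_card _ (by rw [List.toFinset_card_of_nodup hnd, hfull])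
    rw [← List.mem_toFinset, h2]
    exact Finset.mem_univ x
  · exact (ce_main hk hα l hl hc hnd hmax (lt_of_le_of_ne hnd.length_le_card hfull)).elim
end

section
/- A graph G is homogeneously traceable if and only if the join K_1 ∇ G is Hamiltonian-connected. -/
open SimpleGraph Finset Matrix

variable {V : Type*} [Fintype V] [DecidableEq V]

private lemma joinK1_adj_none_some (G : SimpleGraph V) (c : V) :
    (joinK1 G).Adj none (some c) := trivial

private lemma joinK1_adj_some_none (G : SimpleGraph V) (c : V) :
    (joinK1 G).Adj (some c) none := trivial

@[reducible] private def someHom (G : SimpleGraph V) : G →g joinK1 G where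
  toFun := some
  map_rel' := fun h => h

@[simp] private lemma someHom_apply (G : SimpleGraph V) : ⇑(someHom G) = some := rfl

@[simp] private lemma count_none_map_some [BEq (Option V)] [LawfulBEq (Option V)]
    (l : List V) : (l.map some).count (none : Option V) = 0 := by
  rw [List.count_eq_zero]; simp

@[simp] private lemma count_some_map_some [BEq (Option V)] [LawfulBEq (Option V)]
    [BEq V] [LawfulBEq V] (y : V) (l : List V) :
    (l.map some).count (some y) = l.count y := by
  induction l with
  | nil => rfl
  | cons a l ih => simp [List.count_cons, ih, beq_iff_eq]

private lemma hamiltonian_reverse {W : Type*} [DecidableEq W] {H : SimpleGraph W} {a b : W}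
    {p : H.Walk a b} (hp : p.IsHamiltonian) : p.reverse.IsHamiltonian := by
  intro x
  rw [Walk.support_reverse, List.count_reverse]
  exact hp x

private lemma joinK1_lift {G : SimpleGraph V} : ∀ {z w : Option V}
    (r : (joinK1 G).Walk z w) {y : V}, w = some y → none ∉ r.support →
    ∃ (x : V) (_ : z = some x) (q : G.Walk x y),
      r.support = q.support.map some
  | _, _, Walk.nil, y, hw, _ => by
      subst hw; exact ⟨y, rfl, Walk.nil, by simp⟩
  | z, w, Walk.cons h r', y, hw, hn => by
      rw [Walk.support_cons, List.mem_cons] at hn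
      push_neg at hn
      obtain ⟨hz0, hn'⟩ := hn
      obtain ⟨x', hz', q', hs⟩ := joinK1_lift r' hw hn'
      match z, hz0 with
      | some x, _ =>
        subst hz'
        exact ⟨x, rfl, Walk.cons h q', by simp [hs]; rfl⟩

theorem homogeneously_traceable_iff_join_hamiltonian_connected (G : SimpleGraph V) :
    G.IsHomogeneouslyTraceable ↔ (joinK1 G).IsHamiltonianConnected := by
  constructor
  · intro hG u v huv
    have key : ∀ a : V, ∃ W : (joinK1 G).Walk none (some a), W.IsHamiltonian := by
      intro a
      obtain ⟨c, p, hp⟩ := hG a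
      refine ⟨Walk.cons (joinK1_adj_none_some G c)
        (p.reverse.map (someHom G)), ?_⟩
      intro x
      match x with
      | none =>
        simp [Walk.support_cons, Walk.support_map, Walk.support_reverse]
      | some y =>
        simp [Walk.support_cons, Walk.support_map, Walk.support_reverse,
          List.count_cons, hp y]
    match u, v, huv with
    | none, some a, _ => exact key a
    | some a, none, _ =>
      obtain ⟨W, hW⟩ := key a
      exact ⟨W.reverse, hamiltonian_reverse hW⟩
    | some a, some b, hab =>
      have hab' : a ≠ b := by simpa using hab
      obtain ⟨c, p, hp⟩ := hG a
      have hb : b ∈ p.support := hp.mem_support b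
      obtain ⟨x, h, r, hq⟩ := Walk.not_nil_iff.mp
        (Walk.not_nil_of_ne (p := (p.takeUntil b hb).reverse) hab'.symm)
      have hq1 : p.takeUntil b hb = (Walk.cons h r).reverse := by
        rw [← hq, Walk.reverse_reverse]
      have hsupp : p.support = r.support.reverse ++ b :: (p.dropUntil b hb).support.tail := by
        conv_lhs => rw [← p.take_spec hb]
        rw [Walk.support_append, hq1, Walk.support_reverse, Walk.support_cons]
        simp
      have hkey : ∀ y : V,
          r.support.count y + (p.dropUntil b hb).support.count y = 1 := by
        intro y
        have h1 := hp y
        rw [hsupp, List.count_append, List.count_reverse] at h1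
        rw [Walk.support_eq_cons (p.dropUntil b hb)]
        exact h1
      refine ⟨(r.reverse.map (someHom G)).append
        (Walk.cons (joinK1_adj_some_none G x)
          (Walk.cons (joinK1_adj_none_some G c)
            (((p.dropUntil b hb).reverse).map (someHom G)))), ?_⟩
      intro z
      match z with
      | none =>
        simp [Walk.support_append, Walk.support_cons, Walk.support_map,
          Walk.support_reverse]
      | some y =>
        simp only [Walk.support_append, Walk.support_cons, Walk.support_map,
          Walk.support_reverse, List.tail_cons, List.count_append, List.count_cons,
          someHom_apply, List.map_reverse, List.count_reverse,
          count_some_map_some]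
        simpa using hkey y
  · intro hJ u
    obtain ⟨W, hW⟩ := hJ (some u) none (by simp)
    have hW' := hamiltonian_reverse hW
    obtain ⟨z, h, r, hq⟩ := Walk.not_nil_iff.mp
      (Walk.not_nil_of_ne (p := W.reverse) (by simp))
    have hnone : none ∉ r.support := by
      have hp := hW'.isPath
      rw [hq] at hp
      exact (Walk.cons_isPath_iff h r).mp hp |>.2
    obtain ⟨w, hz, q, hs⟩ := joinK1_lift r rfl hnone
    refine ⟨w, q.reverse, ?_⟩
    intro y
    have h1 := hW' (some y)
    rw [hq, Walk.support_cons, hs] at h1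
    simp only [Walk.support_reverse, List.count_reverse]
    simpa using h1
end
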